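/- arXiv:1203.0290 — 7 statements merged into one kernel-verified Lean document; each statement's English description precedes it below -/
import Mathlib

section
/- For a 2-form λ on an m-dimensional vector space V over a field F (of arbitrary characteristic), define Pf_0(λ) = 1 and inductively require that Pf_k(λ) ∈ ⋀^{2k} V* satisfies ι_v Pf_k(λ) = (ι_v λ) ∧ Pf_{k-1}(λ) for all v ∈ V. Then for each k ≥ 1 there exists a unique element Pf_k(λ) ∈ ⋀^{2k} V* satisfying this equation. -/
open ExteriorAlgebra

/-- Interior multiplication `ι_v` of a form (an element of the exterior algebra of the
dual space) by a vector `v`, characterized by `⟨ι_v α, β⟩ = ⟨α, v ∧ β⟩`. -/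
noncomputable def iMul (F : Type*) [Field F] {V : Type*} [AddCommGroup V] [Module F V] (v : V) :
    ExteriorAlgebra F (Module.Dual F V) →ₗ[F] ExteriorAlgebra F (Module.Dual F V) :=
  CliffordAlgebra.contractLeft (Module.Dual.eval F V v)

namespace PfAux

variable {F : Type*} [Field F] {M : Type*} [AddCommGroup M] [Module F M]

local notation d "⌋" x => CliffordAlgebra.contractLeft d x


/-- `ι w` skew-commutes via the grade involution. -/
lemma iota_mul_eq (w : M) (y : ExteriorAlgebra F M) :
    ι F w * y = CliffordAlgebra.involute y * ι F w := by
  induction y using ExteriorAlgebra.induction with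
  | algebraMap r => rw [AlgHom.commutes, Algebra.commutes]
  | ι x =>
      rw [CliffordAlgebra.involute_ι, neg_mul, eq_neg_iff_add_eq_zero]
      exact ι_add_mul_swap w x
  | mul a b ha hb => rw [← mul_assoc, ha, mul_assoc, hb, ← mul_assoc, map_mul]
  | add a b ha hb => rw [mul_add, ha, hb, map_add, add_mul]

lemma mul_iota_eq (w : M) (y : ExteriorAlgebra F M) :
    y * ι F w = ι F w * CliffordAlgebra.involute y := by
  conv_rhs => rw [iota_mul_eq, CliffordAlgebra.involute_involute]

/-- degree-2 decomposables are central -/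
lemma mu_central (a b : M) (z : ExteriorAlgebra F M) :
    (ι F a * ι F b) * z = z * (ι F a * ι F b) := by
  rw [mul_assoc, iota_mul_eq b z, ← mul_assoc, iota_mul_eq a, mul_assoc,
    CliffordAlgebra.involute_involute, ← mul_assoc]

lemma contract_mu (d : Module.Dual F M) (a b : M) :
    (d⌋(ι F a * ι F b)) = d a • ι F b - d b • ι F a := by
  rw [CliffordAlgebra.contractLeft_ι_mul, CliffordAlgebra.contractLeft_ι,
    ← Algebra.commutes, ← Algebra.smul_def]

lemma contract_mu_mul (d : Module.Dual F M) (a b : M) (x : ExteriorAlgebra F M) :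
    (d⌋((ι F a * ι F b) * x)) =
      (d⌋(ι F a * ι F b)) * x + (ι F a * ι F b) * (d⌋x) := by
  rw [contract_mu, mul_assoc, CliffordAlgebra.contractLeft_ι_mul,
    CliffordAlgebra.contractLeft_ι_mul]
  simp only [mul_sub, sub_mul, smul_mul_assoc, mul_smul_comm, mul_assoc]
  abel

lemma contract_mu_mul_mu (d : Module.Dual F M) (a b : M) :
    (d⌋(ι F a * ι F b)) * (ι F a * ι F b) = 0 := by
  rw [contract_mu, sub_mul, smul_mul_assoc, smul_mul_assoc]
  have hba : ι F b * ι F a = -(ι F a * ι F b) :=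
    eq_neg_of_add_eq_zero_left (ι_add_mul_swap b a)
  have h1 : ι F b * (ι F a * ι F b) = 0 := by
    rw [← mul_assoc, hba, neg_mul, mul_assoc, ι_sq_zero, mul_zero, neg_zero]
  have h2 : ι F a * (ι F a * ι F b) = 0 := by
    rw [← mul_assoc, ι_sq_zero, zero_mul]
  rw [h1, h2, smul_zero, smul_zero, sub_zero]

/-- The existence of a Pfaffian sequence, with extra structural properties. -/
theorem exists_pf (x : ExteriorAlgebra F M)
    (hx : x ∈ LinearMap.range (ι F : M →ₗ[F] ExteriorAlgebra F M) ^ 2) :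
    ∃ P : ℕ → ExteriorAlgebra F M, P 0 = 1 ∧ (∀ k, P k ∈ ⋀[F]^(2 * k) M) ∧
      (∀ k z, P k * z = z * P k) ∧
      (∀ k d b, (d⌋(P k * b)) = (d⌋(P k)) * b + P k * (d⌋b)) ∧
      (∀ k d, (d⌋(P (k + 1))) = (d⌋x) * P k) := by
  rw [pow_two] at hx
  refine Submodule.mul_induction_on hx (fun m hm n hn => ?_) (fun u v hu hv => ?_)
  case _ =>
    obtain ⟨a, rfl⟩ := hm
    obtain ⟨b, rfl⟩ := hn
    refine ⟨fun k => if k = 0 then 1 else if k = 1 then ι F a * ι F b else 0, rfl, ?_, ?_, ?_, ?_⟩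
    · intro k
      match k with
      | 0 => simpa using SetLike.one_mem_graded (A := fun i : ℕ => ⋀[F]^i M)
      | 1 =>
        simp only [if_neg one_ne_zero, if_pos rfl]
        have ha : ι F a ∈ ⋀[F]^(1:ℕ) M := by
          rw [show ⋀[F]^(1:ℕ) M = LinearMap.range (ι F : M →ₗ[F] _) from pow_one _]
          exact LinearMap.mem_range_self _ a
        have hb : ι F b ∈ ⋀[F]^(1:ℕ) M := by
          rw [show ⋀[F]^(1:ℕ) M = LinearMap.range (ι F : M →ₗ[F] _) from pow_one _]
          exact LinearMap.mem_range_self _ b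
        have := SetLike.mul_mem_graded (A := fun i : ℕ => ⋀[F]^i M) ha hb
        have h2 : (2:ℕ) * 1 = 1 + 1 := by norm_num
        rw [h2]
        exact this
      | (k + 2) => simp
    · intro k z
      match k with
      | 0 => simp
      | 1 => simpa using mu_central a b z
      | (k + 2) => simp
    · intro k d z
      match k with
      | 0 => simp
      | 1 => simpa using contract_mu_mul d a b z
      | (k + 2) => simp
    · intro k d
      match k with
      | 0 => simp
      | 1 => simpa using (contract_mu_mul_mu d a b).symm
      | (k + 2) => simp
  case _ =>
    obtain ⟨P, hP0, hPmem, hPc, hPd, hPx⟩ := hu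
    obtain ⟨Q, hQ0, hQmem, hQc, hQd, hQy⟩ := hv
    refine ⟨fun k => ∑ i ∈ Finset.range (k + 1), P i * Q (k - i), ?_, ?_, ?_, ?_, ?_⟩
    · simp [hP0, hQ0]
    · intro k
      refine Submodule.sum_mem _ fun i hi => ?_
      have hik : i ≤ k := Nat.lt_succ_iff.mp (Finset.mem_range.mp hi)
      have := SetLike.mul_mem_graded (A := fun i : ℕ => ⋀[F]^i M)
        (hPmem i) (hQmem (k - i))
      have h2 : 2 * i + 2 * (k - i) = 2 * k := by omega
      rwa [h2] at this
    · intro k z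
      rw [Finset.sum_mul, Finset.mul_sum]
      refine Finset.sum_congr rfl fun i _ => ?_
      rw [mul_assoc, hQc, ← mul_assoc, hPc, mul_assoc]
    · intro k d z
      rw [Finset.sum_mul, map_sum, map_sum, Finset.sum_mul, Finset.sum_mul,
        ← Finset.sum_add_distrib]
      refine Finset.sum_congr rfl fun i _ => ?_
      rw [mul_assoc, hPd, hQd, hPd]
      simp only [mul_add, add_mul, mul_assoc]
      abel
    · intro k d
      rw [map_sum]
      have hterm : ∀ i ∈ Finset.range (k + 2),
          (d⌋(P i * Q (k + 1 - i))) =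
            (d⌋(P i)) * Q (k + 1 - i) + P i * (d⌋(Q (k + 1 - i))) := fun i _ => hPd i d _
      rw [Finset.sum_congr rfl hterm, Finset.sum_add_distrib]
      have e1 : ∑ i ∈ Finset.range (k + 2), (d⌋(P i)) * Q (k + 1 - i)
          = (d⌋u) * ∑ i ∈ Finset.range (k + 1), P i * Q (k - i) := by
        rw [Finset.sum_range_succ' (fun i => (d⌋(P i)) * Q (k + 1 - i)) (k + 1)]
        rw [hP0]
        simp only [CliffordAlgebra.contractLeft_one, zero_mul, add_zero]
        rw [Finset.mul_sum]
        refine Finset.sum_congr rfl fun i hi => ?_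
        have hik : i ≤ k := Nat.lt_succ_iff.mp (Finset.mem_range.mp hi)
        have : k + 1 - (i + 1) = k - i := by omega
        rw [this, hPx, mul_assoc]
      have e2 : ∑ i ∈ Finset.range (k + 2), P i * (d⌋(Q (k + 1 - i)))
          = (d⌋v) * ∑ i ∈ Finset.range (k + 1), P i * Q (k - i) := by
        rw [Finset.sum_range_succ (fun i => P i * (d⌋(Q (k + 1 - i)))) (k + 1)]
        rw [Nat.sub_self, hQ0]
        simp only [CliffordAlgebra.contractLeft_one, mul_zero, add_zero]
        rw [Finset.mul_sum]
        refine Finset.sum_congr rfl fun i hi => ?_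
        have hik : i ≤ k := Nat.lt_succ_iff.mp (Finset.mem_range.mp hi)
        have h1 : k + 1 - i = (k - i) + 1 := by omega
        rw [h1, hQy, ← mul_assoc, hPc i, mul_assoc]
      rw [e1, e2, map_add, add_mul]


/-- contraction by `d` kills products with elements of the subalgebra generated by
vectors annihilated by `d`. -/
lemma contract_adjoin_mul (s : Set M) (d : Module.Dual F M) (hd : ∀ w ∈ s, d w = 0)
    {x : ExteriorAlgebra F M} (hx : x ∈ Algebra.adjoin F (ι F '' s)) :
    ∀ z : ExteriorAlgebra F M, (d⌋z) = 0 → (d⌋(x * z)) = 0 := by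
  induction hx using Algebra.adjoin_induction with
  | mem y hy =>
      obtain ⟨w, hw, rfl⟩ := hy
      intro z hz
      rw [CliffordAlgebra.contractLeft_ι_mul, hz, mul_zero, sub_zero, hd w hw, zero_smul]
  | algebraMap r =>
      intro z hz
      rw [← Algebra.smul_def, map_smul, hz, smul_zero]
  | add a b _ _ ha hb =>
      intro z hz
      rw [add_mul, map_add, ha z hz, hb z hz, add_zero]
  | mul a b _ _ ha hb =>
      intro z hz
      rw [mul_assoc]
      exact ha _ (hb z hz)

lemma involute_mem_adjoin (s : Set M) {x : ExteriorAlgebra F M}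
    (hx : x ∈ Algebra.adjoin F (ι F '' s)) :
    CliffordAlgebra.involute x ∈ Algebra.adjoin F (ι F '' s) := by
  induction hx using Algebra.adjoin_induction with
  | mem y hy =>
      obtain ⟨w, hw, rfl⟩ := hy
      rw [CliffordAlgebra.involute_ι]
      exact neg_mem (Algebra.subset_adjoin ⟨w, hw, rfl⟩)
  | algebraMap r => rw [AlgHom.commutes]; exact algebraMap_mem _ r
  | add a b _ _ ha hb => rw [map_add]; exact add_mem ha hb
  | mul a b _ _ ha hb => rw [map_mul]; exact mul_mem ha hb

/-- decomposition lemma: adjoin of `insert w s` splits as `y + ι w * z`. -/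
lemma adjoin_insert_decomp (s : Set M) (w : M) {x : ExteriorAlgebra F M}
    (hx : x ∈ Algebra.adjoin F (ι F '' insert w s)) :
    ∃ y ∈ Algebra.adjoin F (ι F '' s), ∃ z ∈ Algebra.adjoin F (ι F '' s),
      x = y + ι F w * z := by
  induction hx using Algebra.adjoin_induction with
  | mem u hu =>
      obtain ⟨m, hm, rfl⟩ := hu
      rcases hm with rfl | hm
      · exact ⟨0, zero_mem _, 1, one_mem _, by rw [zero_add, mul_one]⟩
      · exact ⟨ι F m, Algebra.subset_adjoin ⟨m, hm, rfl⟩, 0, zero_mem _, by rw [mul_zero, add_zero]⟩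
  | algebraMap r =>
      exact ⟨algebraMap F _ r, algebraMap_mem _ r, 0, zero_mem _, by rw [mul_zero, add_zero]⟩
  | add a b _ _ ha hb =>
      obtain ⟨y1, hy1, z1, hz1, rfl⟩ := ha
      obtain ⟨y2, hy2, z2, hz2, rfl⟩ := hb
      exact ⟨y1 + y2, add_mem hy1 hy2, z1 + z2, add_mem hz1 hz2, by rw [mul_add]; abel⟩
  | mul a b _ _ ha hb =>
      obtain ⟨y1, hy1, z1, hz1, rfl⟩ := ha
      obtain ⟨y2, hy2, z2, hz2, rfl⟩ := hb
      refine ⟨y1 * y2, mul_mem hy1 hy2,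
        CliffordAlgebra.involute y1 * z2 + z1 * y2,
        add_mem (mul_mem (involute_mem_adjoin s hy1) hz2) (mul_mem hz1 hy2), ?_⟩
      have hswap : ∀ y z : ExteriorAlgebra F M,
          y * (ι F w * z) = ι F w * (CliffordAlgebra.involute y * z) := fun y z => by
        rw [← mul_assoc, mul_iota_eq w y, mul_assoc]
      have h3 : ∀ X : ExteriorAlgebra F M, ι F w * (ι F w * X) = 0 := fun X => by
        rw [← mul_assoc, ι_sq_zero, zero_mul]
      have hA : (ι F w * z1) * y2 = ι F w * (z1 * y2) := mul_assoc _ _ _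
      have hB : (ι F w * z1) * (ι F w * z2) = 0 := by rw [mul_assoc, hswap z1 z2, h3]
      rw [add_mul, mul_add, mul_add, hswap y1 z2, hA, hB, add_zero, mul_add]
      abel

/-- every element lies in the subalgebra generated by the `ι` of a basis. -/
lemma mem_adjoin_basis {κ : Type*} [Fintype κ] (b : Module.Basis κ F M) (x : ExteriorAlgebra F M) :
    x ∈ Algebra.adjoin F (ι F '' Set.range b) := by
  induction x using ExteriorAlgebra.induction with
  | algebraMap r => exact algebraMap_mem _ r
  | ι m =>
      have : ι F m = ∑ i, b.repr m i • ι F (b i) := by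
        conv_lhs => rw [← b.sum_repr m]
        simp only [map_sum, map_smul]
      rw [this]
      exact Subalgebra.sum_mem _ fun i _ => Subalgebra.smul_mem _
        (Algebra.subset_adjoin (Set.mem_image_of_mem _ (Set.mem_range_self i))) _
  | mul a c ha hc => exact mul_mem ha hc
  | add a c ha hc => exact add_mem ha hc

/-- The key vanishing lemma: a homogeneous element of positive degree all of whose
contractions vanish is zero. -/
lemma eq_zero_of_contract [FiniteDimensional F M] {x : ExteriorAlgebra F M}
    (hx : ∀ d : Module.Dual F M, (d⌋x) = 0)
    {n : ℕ} (hn : n ≠ 0) (hmem : x ∈ ⋀[F]^n M) : x = 0 := by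
  classical
  set m := Module.finrank F M with hm
  let b : Module.Basis (Fin m) F M := Module.finBasis F M
  -- downward chain of subalgebras
  have key : ∀ k : ℕ, x ∈ Algebra.adjoin F (ι F '' (b '' {i : Fin m | k ≤ (i : ℕ)})) := by
    intro k
    induction k with
    | zero =>
        have : {i : Fin m | 0 ≤ (i : ℕ)} = Set.univ := by ext i; simp
        rw [this, Set.image_univ]
        exact mem_adjoin_basis b x
    | succ k ih =>
        by_cases hk : k < m
        · have hset : {i : Fin m | k ≤ (i : ℕ)} =
              insert (⟨k, hk⟩ : Fin m) {i : Fin m | k + 1 ≤ (i : ℕ)} := by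
            ext i
            simp only [Set.mem_setOf_eq, Set.mem_insert_iff, Fin.ext_iff]
            omega
          rw [hset, Set.image_insert_eq] at ih
          obtain ⟨y, hy, z, hz, hxyz⟩ := adjoin_insert_decomp _ _ ih
          set d : Module.Dual F M := b.coord ⟨k, hk⟩ with hd
          have hdvanish : ∀ w ∈ b '' {i : Fin m | k + 1 ≤ (i : ℕ)}, d w = 0 := by
            rintro w ⟨j, hj, rfl⟩
            have hjk : (⟨k, hk⟩ : Fin m) ≠ j := by
              simp only [Set.mem_setOf_eq] at hj
              rintro rfl
              simp only [Fin.val_mk] at hj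
              omega
            simp only [hd, Module.Basis.coord_apply, Module.Basis.repr_self]
            exact Finsupp.single_eq_of_ne hjk
          have hdy : (d⌋y) = 0 := by
            have := contract_adjoin_mul _ d hdvanish hy 1 (CliffordAlgebra.contractLeft_one _ _)
            rwa [mul_one] at this
          have hdz : (d⌋z) = 0 := by
            have := contract_adjoin_mul _ d hdvanish hz 1 (CliffordAlgebra.contractLeft_one _ _)
            rwa [mul_one] at this
          have hcontr : (d⌋x) = z := by
            rw [hxyz, map_add, hdy, zero_add, CliffordAlgebra.contractLeft_ι_mul, hdz,
              mul_zero, sub_zero, hd]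
            rw [Module.Basis.coord_apply, Module.Basis.repr_self, Finsupp.single_eq_same, one_smul]
          have hz0 : z = 0 := by rw [← hcontr, hx d]
          rw [hz0, mul_zero, add_zero] at hxyz
          rwa [hxyz]
        · have hset : {i : Fin m | k ≤ (i : ℕ)} = {i : Fin m | k + 1 ≤ (i : ℕ)} := by
            ext i
            have := i.isLt
            simp only [Set.mem_setOf_eq]
            omega
          rwa [hset] at ih
  -- at level m the subalgebra is trivial
  have hempty : {i : Fin m | m ≤ (i : ℕ)} = ∅ := by
    ext i; have := i.isLt; simp only [Set.mem_setOf_eq, Set.mem_empty_iff_false, iff_false]; omega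
  have hx0 : x ∈ (⊥ : Subalgebra F (ExteriorAlgebra F M)) := by
    have := key m
    rwa [hempty, Set.image_empty, Set.image_empty, Algebra.adjoin_empty] at this
  obtain ⟨r, hr⟩ := Algebra.mem_bot.mp hx0
  -- hence x is a scalar, but it is homogeneous of positive degree
  have h0mem : x ∈ ⋀[F]^(0:ℕ) M := by
    rw [show ⋀[F]^(0:ℕ) M = (1 : Submodule F (ExteriorAlgebra F M)) from pow_zero _, ← hr]
    exact Submodule.algebraMap_mem r
  have h1 : (DirectSum.decompose (fun i : ℕ => ⋀[F]^i M) x 0 : ExteriorAlgebra F M) = x :=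
    DirectSum.decompose_of_mem_same _ h0mem
  have h2 : (DirectSum.decompose (fun i : ℕ => ⋀[F]^i M) x 0 : ExteriorAlgebra F M) = 0 :=
    DirectSum.decompose_of_mem_ne (fun i : ℕ => ⋀[F]^i M) hmem hn
  rw [← h1, h2]


end PfAux

set_option maxHeartbeats 1000000 in
set_option synthInstance.maxHeartbeats 400000 in
/-- For a nonzero 2-form `λ` on a finite-dimensional vector space `V`
over an arbitrary field `F`, there is a unique sequence of Pfaffians
`Pf k ∈ ⋀^{2k} V*` with `Pf 0 = 1` and `ι_v (Pf (k+1)) = (ι_v λ) ∧ Pf k` for all `v ∈ V`;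
in particular for each `k ≥ 1` the element `Pf_k(λ)` exists and is unique. -/
theorem pfaffian_existence_uniqueness (F : Type*) [Field F] (V : Type*) [AddCommGroup V]
    [Module F V] [FiniteDimensional F V]
    (lam : ExteriorAlgebra F (Module.Dual F V))
    (hlam2 : lam ∈ ⋀[F]^2 (Module.Dual F V)) (hlam : lam ≠ 0) :
    ∃! P : ℕ → ExteriorAlgebra F (Module.Dual F V),
      P 0 = 1 ∧ (∀ k : ℕ, 1 ≤ k → P k ∈ ⋀[F]^(2 * k) (Module.Dual F V)) ∧
        ∀ (k : ℕ) (v : V), iMul F v (P (k + 1)) = iMul F v lam * P k := by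
  classical
  have hlam2' : lam ∈ LinearMap.range
      (ι F : Module.Dual F V →ₗ[F] ExteriorAlgebra F (Module.Dual F V)) ^ 2 := hlam2
  obtain ⟨P, hP0, hPmem, hPc, hPd, hPx⟩ := PfAux.exists_pf lam hlam2'
  have heval : Function.Surjective (Module.Dual.eval F V) := by
    rw [← Module.evalEquiv_toLinearMap]
    exact (Module.evalEquiv F V).surjective
  refine ⟨P, ⟨hP0, fun k _ => hPmem k, fun k v => hPx k (Module.Dual.eval F V v)⟩, ?_⟩
  rintro P' ⟨hP'0, hP'mem, hP'x⟩
  funext k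
  induction k with
  | zero => rw [hP'0, hP0]
  | succ k ih =>
    have hmemD : P' (k + 1) - P (k + 1) ∈ ⋀[F]^(2 * (k + 1)) (Module.Dual F V) :=
      Submodule.sub_mem _ (hP'mem (k + 1) (by omega)) (hPmem (k + 1))
    have hcontr : ∀ d : Module.Dual F (Module.Dual F V),
        CliffordAlgebra.contractLeft d (P' (k + 1) - P (k + 1)) = 0 := by
      intro d
      obtain ⟨v, rfl⟩ := heval d
      have h1 : CliffordAlgebra.contractLeft (Module.Dual.eval F V v) (P' (k + 1)) =
          CliffordAlgebra.contractLeft (Module.Dual.eval F V v) lam * P' k := hP'x k v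
      rw [map_sub, h1, hPx k, ih, sub_self]
    have := PfAux.eq_zero_of_contract hcontr (n := 2 * (k + 1)) (by omega) hmemD
    exact sub_eq_zero.mp this
end

section
/- For 2-forms λ₁, λ₂ on a finite-dimensional vector space V over an arbitrary field, the k-th Pfaffians satisfy the binomial-type identity Pf_k(λ₁ + λ₂) = Σ_{j=0}^{k} Pf_j(λ₁) ∧ Pf_{k-j}(λ₂). -/
open ExteriorAlgebra

set_option synthInstance.maxHeartbeats 1000000
set_option maxHeartbeats 1000000

section Generic
variable {R M : Type*} [CommRing R] [AddCommGroup M] [Module R M]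

noncomputable def Pl (l : List M) : ExteriorAlgebra R M := (l.map (ι R)).prod
@[simp] lemma Pl_nil : (Pl ([] : List M) : ExteriorAlgebra R M) = 1 := rfl
@[simp] lemma Pl_cons (a : M) (l : List M) : (Pl (a :: l) : ExteriorAlgebra R M) = ι R a * Pl l := by
  simp [Pl]
lemma contract_ι_mul (g : Module.Dual R M) (a : M) (x : ExteriorAlgebra R M) :
    CliffordAlgebra.contractLeft g (ι R a * x) =
      g a • x - ι R a * CliffordAlgebra.contractLeft g x :=
  CliffordAlgebra.contractLeft_ι_mul (Q := (0 : QuadraticForm R M)) (d := g) a x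

@[simp] lemma algebraMapInv_ι (a : M) : (algebraMapInv (ι R a) : R) = 0 := by
  simp [algebraMapInv, lift_ι_apply]

lemma ι_mul_eq_neg (a c : M) : (ι R a * ι R c : ExteriorAlgebra R M) = - (ι R c * ι R a) :=
  eq_neg_of_add_eq_zero_left (ι_add_mul_swap a c)

lemma Pl_mul_ι (l : List M) (a : M) :
    (Pl l : ExteriorAlgebra R M) * ι R a = ((-1 : R) ^ l.length) • (ι R a * Pl l) := by
  induction l with
  | nil => simp
  | cons c t ih =>
    rw [Pl_cons, mul_assoc, ih, List.length_cons, pow_succ, mul_smul]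
    rw [mul_smul_comm, ← mul_assoc, ι_mul_eq_neg c a]
    simp [mul_assoc]

lemma Pl_mul_ι_of_mem {l : List M} {a : M} (h : a ∈ l) :
    (Pl l : ExteriorAlgebra R M) * ι R a = 0 := by
  induction l with
  | nil => simp at h
  | cons c t ih =>
    rcases List.mem_cons.mp h with rfl | h
    · rw [Pl_cons, mul_assoc, Pl_mul_ι, mul_smul_comm, ← mul_assoc, ι_sq_zero, zero_mul, smul_zero]
    · rw [Pl_cons, mul_assoc, ih h, mul_zero]

lemma ι_mul_Pl_of_mem {l : List M} {a : M} (h : a ∈ l) :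
    (ι R a * Pl l : ExteriorAlgebra R M) = 0 := by
  have := Pl_mul_ι (R := R) l a
  rw [Pl_mul_ι_of_mem h] at this
  rcases Nat.even_or_odd l.length with he | ho
  · rw [he.neg_one_pow, one_smul] at this; exact this.symm
  · rw [ho.neg_one_pow, neg_smul, one_smul, eq_comm, neg_eq_zero] at this; exact this

lemma contract_Pl_mul (g : Module.Dual R M) (l : List M) (y : ExteriorAlgebra R M) :
    CliffordAlgebra.contractLeft g (Pl l * y) =
      CliffordAlgebra.contractLeft g (Pl l) * y
        + ((-1 : R) ^ l.length) • (Pl l * CliffordAlgebra.contractLeft g y) := by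
  induction l with
  | nil => simp [CliffordAlgebra.contractLeft_one]
  | cons a t ih =>
    rw [Pl_cons, mul_assoc, contract_ι_mul, contract_ι_mul, ih, List.length_cons, pow_succ]
    rw [mul_add, sub_mul, smul_mul_assoc, mul_smul]
    simp only [mul_assoc, smul_smul, mul_comm ((-1 : R) ^ t.length) (-1 : R)]
    rw [mul_smul_comm]
    abel_nf
    congr 2
    rw [mul_smul]
    norm_num

lemma even_contract_mul (g : Module.Dual R M) {j : ℕ} {x : ExteriorAlgebra R M}
    (hx : x ∈ ⋀[R]^(2 * j) M) (y : ExteriorAlgebra R M) :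
    CliffordAlgebra.contractLeft g (x * y) =
      CliffordAlgebra.contractLeft g x * y + x * CliffordAlgebra.contractLeft g y := by
  rw [← ιMulti_span_fixedDegree] at hx
  induction hx using Submodule.span_induction with
  | mem z hz =>
    obtain ⟨v, rfl⟩ := hz
    have h1 : ιMulti R (2 * j) v = Pl (List.ofFn v) := by
      rw [ιMulti_apply, Pl, List.map_ofFn]; rfl
    rw [h1, contract_Pl_mul]
    simp [List.length_ofFn, pow_mul, neg_one_sq]
  | zero => simp
  | add a b _ _ ha hb => simp only [add_mul, map_add, ha, hb]; abel
  | smul r a _ ha => simp only [smul_mul_assoc, map_smul, ha, smul_add]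

lemma even_mul_ι_comm {j : ℕ} {x : ExteriorAlgebra R M} (hx : x ∈ ⋀[R]^(2 * j) M) (a : M) :
    x * ι R a = ι R a * x := by
  rw [← ιMulti_span_fixedDegree] at hx
  induction hx using Submodule.span_induction with
  | mem z hz =>
    obtain ⟨v, rfl⟩ := hz
    have h1 : ιMulti R (2 * j) v = Pl (List.ofFn v) := by
      rw [ιMulti_apply, Pl, List.map_ofFn]; rfl
    rw [h1, Pl_mul_ι]
    simp [List.length_ofFn, pow_mul, neg_one_sq]
  | zero => simp
  | add a' b _ _ ha hb => rw [add_mul, mul_add, ha, hb]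
  | smul r a' _ ha => rw [smul_mul_assoc, mul_smul_comm, ha]

lemma mul_mem_exteriorPower {p q : ℕ} {x y : ExteriorAlgebra R M}
    (hx : x ∈ ⋀[R]^p M) (hy : y ∈ ⋀[R]^q M) : x * y ∈ ⋀[R]^(p+q) M := by
  rw [exteriorPower, pow_add]
  exact Submodule.mul_mem_mul hx hy

lemma one_mem_exteriorPower_zero : (1 : ExteriorAlgebra R M) ∈ ⋀[R]^0 M := by
  rw [exteriorPower, pow_zero]
  exact Submodule.one_le.mp le_rfl

lemma contract_sq_mem_range (g : Module.Dual R M) {x : ExteriorAlgebra R M}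
    (hx : x ∈ ⋀[R]^2 M) :
    CliffordAlgebra.contractLeft g x ∈ LinearMap.range (ι R : M →ₗ[R] ExteriorAlgebra R M) := by
  rw [exteriorPower, pow_two] at hx
  refine Submodule.mul_induction_on hx ?_ ?_
  · rintro _ ⟨a, rfl⟩ _ ⟨b, rfl⟩
    rw [contract_ι_mul, CliffordAlgebra.contractLeft_ι]
    have : (ι R a : ExteriorAlgebra R M) * algebraMap R _ (g b) = g b • ι R a := by
      rw [← Algebra.commutes, ← Algebra.smul_def]
    rw [this]
    exact sub_mem (Submodule.smul_mem _ _ ⟨b, rfl⟩) (Submodule.smul_mem _ _ ⟨a, rfl⟩)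
  · intro a b ha hb
    rw [map_add]
    exact add_mem ha hb

lemma algebraMapInv_eq_zero_of_mem {m : ℕ} {x : ExteriorAlgebra R M}
    (hx : x ∈ ⋀[R]^(m+1) M) : algebraMapInv (R := R) (M := M) x = 0 := by
  rw [exteriorPower, pow_succ] at hx
  refine Submodule.mul_induction_on hx ?_ ?_
  · rintro a _ _ ⟨b, rfl⟩
    rw [map_mul, algebraMapInv_ι, mul_zero]
  · intro a b ha hb
    rw [map_add, ha, hb, add_zero]

end Generic

section FieldPart
variable {F W : Type*} [Field F] [AddCommGroup W] [Module F W]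

/-- Iterated contraction followed by projection to the scalar part. -/
noncomputable def Chi {n : ℕ} (b : Module.Basis (Fin n) F W) :
    List (Fin n) → (ExteriorAlgebra F W →ₗ[F] F)
  | [] => (algebraMapInv : ExteriorAlgebra F W →ₐ[F] F).toLinearMap
  | i :: t => (Chi b t) ∘ₗ CliffordAlgebra.contractLeft (b.coord i)

@[simp] lemma Chi_nil {n : ℕ} (b : Module.Basis (Fin n) F W) (x : ExteriorAlgebra F W) :
    Chi b [] x = algebraMapInv x := rfl

@[simp] lemma Chi_cons {n : ℕ} (b : Module.Basis (Fin n) F W) (i : Fin n) (t : List (Fin n))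
    (x : ExteriorAlgebra F W) :
    Chi b (i :: t) x = Chi b t (CliffordAlgebra.contractLeft (b.coord i) x) := rfl

lemma coord_basis {n : ℕ} (b : Module.Basis (Fin n) F W) (i j : Fin n) :
    b.coord i (b j) = if j = i then 1 else 0 := by
  rw [Module.Basis.coord_apply, Module.Basis.repr_self, Finsupp.single_apply]

lemma contract_Pl_basis {n : ℕ} (b : Module.Basis (Fin n) F W) (i : Fin n) :
    ∀ (l : List (Fin n)), l.Nodup →
    CliffordAlgebra.contractLeft (b.coord i) (Pl (l.map b) : ExteriorAlgebra F W) =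
      if i ∈ l then ((-1 : F) ^ (l.idxOf i)) • (Pl ((l.erase i).map b)) else 0 := by
  intro l
  induction l with
  | nil => intro _; simp [CliffordAlgebra.contractLeft_one]
  | cons j t ih =>
    intro hnd
    have hjt : j ∉ t := (List.nodup_cons.mp hnd).1
    have hndt : t.Nodup := (List.nodup_cons.mp hnd).2
    rw [List.map_cons, Pl_cons, contract_ι_mul, coord_basis, ih hndt]
    by_cases hij : i = j
    · subst hij
      have hit : i ∉ t := hjt
      simp only [if_pos rfl, if_neg hit, List.erase_cons_head]
      simp [List.idxOf_cons_self]
    · have hji : ¬ (j = i) := fun h => hij h.symm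
      rw [if_neg hji, zero_smul, zero_sub]
      by_cases hit : i ∈ t
      · rw [if_pos hit, if_pos (List.mem_cons_of_mem _ hit)]
        rw [List.erase_cons_tail, List.map_cons, Pl_cons]
        · rw [mul_smul_comm, List.idxOf_cons_ne _ (Ne.symm hij)]
          rw [pow_succ, mul_comm, mul_smul, neg_smul, one_smul]
        · simp [hji]
      · rw [if_neg hit, if_neg (by simp [hij, hit])]
        simp

lemma algebraMapInv_Pl {l : List W} (h : l ≠ []) :
    algebraMapInv (Pl l : ExteriorAlgebra F W) = 0 := by
  cases l with
  | nil => exact absurd rfl h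
  | cons a t => rw [Pl_cons, map_mul, algebraMapInv_ι, zero_mul]

lemma chi_orthogonal {n : ℕ} (b : Module.Basis (Fin n) F W) :
    ∀ (l : List (Fin n)), l.Nodup → ∀ (l' : List (Fin n)), l'.Nodup →
      (if l'.toFinset = l.toFinset
        then (Chi b l (Pl (l'.map b)) = 1 ∨ Chi b l (Pl (l'.map b)) = -1)
        else Chi b l (Pl (l'.map b)) = 0) := by
  intro l
  induction l with
  | nil =>
    intro _ l' hl'
    cases l' with
    | nil => simp
    | cons a t =>
      rw [if_neg (by simp), Chi_nil, algebraMapInv_Pl (by simp)]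
  | cons i t ih =>
    intro hnd l' hl'
    have hit : i ∉ t := (List.nodup_cons.mp hnd).1
    have hndt : t.Nodup := (List.nodup_cons.mp hnd).2
    rw [Chi_cons, contract_Pl_basis b i l' hl']
    by_cases hil' : i ∈ l'
    · rw [if_pos hil', map_smul]
      have herase : (l'.erase i).Nodup := hl'.erase i
      have hte : (l'.erase i).toFinset = l'.toFinset.erase i := by
        ext a
        simp [List.mem_toFinset, hl'.mem_erase_iff, Finset.mem_erase]
      have hIH := ih hndt (l'.erase i) herase
      have hiff : (l'.erase i).toFinset = t.toFinset ↔ l'.toFinset = (i :: t).toFinset := by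
        constructor
        · intro h
          rw [List.toFinset_cons, ← h, hte, Finset.insert_erase (List.mem_toFinset.mpr hil')]
        · intro h
          rw [hte, h, List.toFinset_cons,
            Finset.erase_insert (by simp [hit])]
      by_cases heq : l'.toFinset = (i :: t).toFinset
      · rw [if_pos heq]
        rw [if_pos (hiff.mpr heq)] at hIH
        rcases Nat.even_or_odd (l'.idxOf i) with hp | hp
        · rw [hp.neg_one_pow, one_smul]
          exact hIH
        · rw [hp.neg_one_pow, neg_smul, one_smul]
          rcases hIH with h1 | h1
          · right; rw [h1]
          · left; rw [h1, neg_neg]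
      · rw [if_neg heq]
        rw [if_neg (fun h => heq (hiff.mp h))] at hIH
        rw [hIH, smul_zero]
    · rw [if_neg hil', map_zero]
      rw [if_neg (fun h => hil' (by
        have : i ∈ l'.toFinset := h ▸ (by simp)
        exact List.mem_toFinset.mp this))]

lemma sort_toFinset_eq {n : ℕ} {l : List (Fin n)} (hs : l.Pairwise (· ≤ ·)) (hnd : l.Nodup) :
    Finset.sort l.toFinset (· ≤ ·) = l :=
  List.Perm.eq_of_pairwise' (Finset.pairwise_sort _ _) hs
    (List.perm_of_nodup_nodup_toFinset_eq (Finset.sort_nodup _ _) hnd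
      (Finset.sort_toFinset _ _))

/-- The basis wedge associated with a finset of indices. -/
noncomputable def Es {n : ℕ} (b : Module.Basis (Fin n) F W) (s : Finset (Fin n)) :
    ExteriorAlgebra F W :=
  Pl ((Finset.sort s (· ≤ ·)).map b)

lemma Es_apply {n : ℕ} (b : Module.Basis (Fin n) F W) (s : Finset (Fin n)) :
    Es b s = Pl ((Finset.sort s (· ≤ ·)).map b) := rfl

lemma ordered_insert_sign {n : ℕ} (b : Module.Basis (Fin n) F W) (i : Fin n) :
    ∀ (l : List (Fin n)), l.Pairwise (· ≤ ·) → i ∉ l →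
      (ι F (b i) * Pl (l.map b) : ExteriorAlgebra F W) =
          Pl (((List.orderedInsert (· ≤ ·) i l).map b))
        ∨ (ι F (b i) * Pl (l.map b) : ExteriorAlgebra F W) =
          - Pl (((List.orderedInsert (· ≤ ·) i l).map b)) := by
  intro l
  induction l with
  | nil => intro _ _; left; simp
  | cons j t ih =>
    intro hs hil
    have hineult : i ∉ t := fun h => hil (List.mem_cons_of_mem _ h)
    by_cases hij : i ≤ j
    · left
      rw [List.orderedInsert, if_pos hij]
      simp
    · rw [List.orderedInsert, if_neg hij]
      have h1 : (ι F (b i) * Pl ((j :: t).map b) : ExteriorAlgebra F W)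
          = - (ι F (b j) * (ι F (b i) * Pl (t.map b))) := by
        rw [List.map_cons, Pl_cons, ← mul_assoc, ι_mul_eq_neg, ← mul_assoc, neg_mul]
      rcases ih hs.of_cons hineult with h2 | h2
      · right
        rw [h1, h2, List.map_cons, Pl_cons]
      · left
        rw [h1, h2, List.map_cons, Pl_cons, mul_neg, neg_neg]

lemma ι_mul_Es_mem_span {n : ℕ} (b : Module.Basis (Fin n) F W) (i : Fin n) (s : Finset (Fin n)) :
    (ι F (b i) * Es b s : ExteriorAlgebra F W) ∈
      Submodule.span F (Set.range (Es b)) := by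
  by_cases his : i ∈ s
  · have : (b i) ∈ (Finset.sort s (· ≤ ·)).map b :=
      List.mem_map_of_mem ((Finset.mem_sort _).mpr his)
    rw [Es, ι_mul_Pl_of_mem this]
    exact Submodule.zero_mem _
  · have hnotmem : i ∉ Finset.sort s (· ≤ ·) := fun h => his ((Finset.mem_sort _).mp h)
    rcases ordered_insert_sign b i (Finset.sort s (· ≤ ·)) (Finset.pairwise_sort _ _)
      hnotmem with h | h
    all_goals {
      rw [Es, h]
      have hsrt : (List.orderedInsert (· ≤ ·) i (Finset.sort s (· ≤ ·))).Pairwise (· ≤ ·) :=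
        List.Pairwise.orderedInsert _ _ (Finset.pairwise_sort _ _)
      have hnd : (List.orderedInsert (· ≤ ·) i (Finset.sort s (· ≤ ·))).Nodup :=
        ((List.perm_orderedInsert _ _ _).nodup_iff).mpr
          (List.nodup_cons.mpr ⟨hnotmem, Finset.sort_nodup _ _⟩)
      have heq : Pl ((List.orderedInsert (· ≤ ·) i (Finset.sort s (· ≤ ·))).map b)
          = Es b (List.orderedInsert (· ≤ ·) i (Finset.sort s (· ≤ ·))).toFinset := by
        rw [Es, sort_toFinset_eq hsrt hnd]
      first
      | (rw [heq]; exact Submodule.subset_span ⟨_, rfl⟩)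
      | (rw [heq]; exact Submodule.neg_mem _ (Submodule.subset_span ⟨_, rfl⟩))
    }

lemma span_Es_top {n : ℕ} (b : Module.Basis (Fin n) F W) (x : ExteriorAlgebra F W) :
    x ∈ Submodule.span F (Set.range (Es b)) := by
  have key : ∀ y ∈ Submodule.span F (Set.range (Es b)), ∀ i : Fin n,
      (ι F (b i) * y : ExteriorAlgebra F W) ∈ Submodule.span F (Set.range (Es b)) := by
    intro y hy i
    induction hy using Submodule.span_induction with
    | mem z hz => obtain ⟨s, rfl⟩ := hz; exact ι_mul_Es_mem_span b i s
    | zero => rw [mul_zero]; exact Submodule.zero_mem _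
    | add a c _ _ ha hc => rw [mul_add]; exact Submodule.add_mem _ ha hc
    | smul r a _ ha => rw [mul_smul_comm]; exact Submodule.smul_mem _ _ ha
  induction x using CliffordAlgebra.left_induction with
  | algebraMap r =>
    have h1 : (algebraMap F (ExteriorAlgebra F W) r) = r • Es b ∅ := by
      rw [Es, Finset.sort_empty, List.map_nil, Pl_nil, Algebra.algebraMap_eq_smul_one]
    rw [h1]
    exact Submodule.smul_mem _ _ (Submodule.subset_span ⟨∅, rfl⟩)
  | add x y hx hy => exact Submodule.add_mem _ hx hy
  | ι_mul x m hx =>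
    have hm : (ι F m : ExteriorAlgebra F W) = ∑ i, b.repr m i • ι F (b i) := by
      conv_lhs => rw [← b.sum_repr m]
      rw [map_sum]
      simp [map_smul]
    rw [hm, Finset.sum_mul]
    refine Submodule.sum_mem _ fun i _ => ?_
    rw [smul_mul_assoc]
    exact Submodule.smul_mem _ _ (key x hx i)

lemma eq_zero_of_contract_eq_zero {n : ℕ} (b : Module.Basis (Fin n) F W)
    (x : ExteriorAlgebra F W) (h0 : algebraMapInv x = 0)
    (hc : ∀ g : Module.Dual F W, CliffordAlgebra.contractLeft g x = 0) : x = 0 := by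
  have hChi : ∀ l : List (Fin n), Chi b l x = 0 := by
    intro l
    cases l with
    | nil => rw [Chi_nil, h0]
    | cons i t => rw [Chi_cons, hc, map_zero]
  obtain ⟨c, hcx⟩ := (Submodule.mem_span_range_iff_exists_fun F).mp (span_Es_top b x)
  have hc0 : ∀ s : Finset (Fin n), c s = 0 := by
    intro s₀
    have h1 := hChi (Finset.sort s₀ (· ≤ ·))
    rw [← hcx, map_sum] at h1
    rw [Finset.sum_eq_single s₀ (fun s _ hs => ?_) (fun h => absurd (Finset.mem_univ s₀) h)] at h1
    · have horth := chi_orthogonal b (Finset.sort s₀ (· ≤ ·)) (Finset.sort_nodup _ _)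
        (Finset.sort s₀ (· ≤ ·)) (Finset.sort_nodup _ _)
      rw [if_pos rfl] at horth
      rcases horth with h2 | h2
      · rw [map_smul, Es_apply, h2, smul_eq_mul, mul_one] at h1; exact h1
      · rw [map_smul, Es_apply, h2, smul_eq_mul, mul_neg_one, neg_eq_zero] at h1; exact h1
    · have horth := chi_orthogonal b (Finset.sort s₀ (· ≤ ·)) (Finset.sort_nodup _ _)
        (Finset.sort s (· ≤ ·)) (Finset.sort_nodup _ _)
      rw [if_neg (by rw [Finset.sort_toFinset, Finset.sort_toFinset]; exact hs)] at horth
      rw [map_smul, Es_apply, horth, smul_zero]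
  rw [← hcx]
  refine Finset.sum_eq_zero fun s _ => by rw [hc0 s, zero_smul]

end FieldPart

/-- The Pfaffians of 2-forms satisfy the binomial-type identity
`Pf_k(λ₁ + λ₂) = Σ_{j=0}^{k} Pf_j(λ₁) ∧ Pf_{k-j}(λ₂)`. -/
theorem pfaffian_add (F : Type*) [Field F] (V : Type*) [AddCommGroup V]
    [Module F V] [FiniteDimensional F V]
    (Pf : ExteriorAlgebra F (Module.Dual F V) → ℕ → ExteriorAlgebra F (Module.Dual F V))
    (hPf0 : ∀ l, Pf l 0 = 1)
    (hPfmem : ∀ l ∈ ⋀[F]^2 (Module.Dual F V), ∀ k : ℕ, 1 ≤ k →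
      Pf l k ∈ ⋀[F]^(2 * k) (Module.Dual F V))
    (hPf : ∀ l ∈ ⋀[F]^2 (Module.Dual F V), ∀ (k : ℕ) (v : V),
      iMul F v (Pf l (k + 1)) = iMul F v l * Pf l k)
    (l₁ l₂ : ExteriorAlgebra F (Module.Dual F V))
    (h₁ : l₁ ∈ ⋀[F]^2 (Module.Dual F V)) (h₂ : l₂ ∈ ⋀[F]^2 (Module.Dual F V)) (k : ℕ) :
    Pf (l₁ + l₂) k = ∑ j ∈ Finset.range (k + 1), Pf l₁ j * Pf l₂ (k - j) := by
  set W := Module.Dual F V with hW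
  have hPfmem' : ∀ l ∈ ⋀[F]^2 W, ∀ j : ℕ, Pf l j ∈ ⋀[F]^(2 * j) W := by
    intro l hl j
    cases j with
    | zero => rw [hPf0]; exact one_mem_exteriorPower_zero
    | succ m => exact hPfmem l hl (m+1) (Nat.succ_le_succ (Nat.zero_le m))
  induction k with
  | zero => simp [hPf0]
  | succ k ih =>
    have h12 : l₁ + l₂ ∈ ⋀[F]^2 W := add_mem h₁ h₂
    set S : ℕ → ExteriorAlgebra F W :=
      fun m => ∑ j ∈ Finset.range (m + 1), Pf l₁ j * Pf l₂ (m - j) with hS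
    have hSmem : S (k+1) ∈ ⋀[F]^(2*k+1+1) W := by
      refine Submodule.sum_mem _ fun j hj => ?_
      have hjle : j ≤ k + 1 := Nat.lt_succ_iff.mp (Finset.mem_range.mp hj)
      have harith : 2*j + 2*(k+1-j) = 2*k+1+1 := by omega
      have hmm := mul_mem_exteriorPower (hPfmem' l₁ h₁ j) (hPfmem' l₂ h₂ (k+1-j))
      rwa [harith] at hmm
    have hLmem : Pf (l₁ + l₂) (k+1) ∈ ⋀[F]^(2*k+1+1) W := by
      have harith : 2*(k+1) = 2*k+1+1 := by omega
      have hmm := hPfmem' (l₁ + l₂) h12 (k+1)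
      rwa [harith] at hmm
    have hxmem : Pf (l₁ + l₂) (k+1) - S (k+1) ∈ ⋀[F]^(2*k+1+1) W :=
      sub_mem hLmem hSmem
    have h0 : algebraMapInv (Pf (l₁ + l₂) (k+1) - S (k+1)) = 0 :=
      algebraMapInv_eq_zero_of_mem hxmem
    have hc : ∀ g : Module.Dual F W,
        CliffordAlgebra.contractLeft g (Pf (l₁ + l₂) (k+1) - S (k+1)) = 0 := by
      intro g
      obtain ⟨v, rfl⟩ : ∃ v : V, Module.Dual.eval F V v = g :=
        ⟨(Module.evalEquiv F V).symm g, by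
          rw [← Module.evalEquiv_apply, LinearEquiv.apply_symm_apply]⟩
      have hCeq : ∀ x : ExteriorAlgebra F W,
          CliffordAlgebra.contractLeft (Module.Dual.eval F V v) x = iMul F v x :=
        fun _ => rfl
      rw [map_sub, hCeq, hCeq]
      have hL : iMul F v (Pf (l₁ + l₂) (k+1)) = iMul F v (l₁ + l₂) * S k := by
        rw [hPf (l₁ + l₂) h12 k v, ih]
      have hR : iMul F v (S (k+1)) = iMul F v l₁ * S k + iMul F v l₂ * S k := by
        rw [hS]
        simp only [map_sum]
        have hterm : ∀ j ∈ Finset.range (k+2),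
            iMul F v (Pf l₁ j * Pf l₂ (k+1-j)) =
              iMul F v (Pf l₁ j) * Pf l₂ (k+1-j) + Pf l₁ j * iMul F v (Pf l₂ (k+1-j)) := by
          intro j _
          exact even_contract_mul _ (hPfmem' l₁ h₁ j) _
        rw [Finset.sum_congr rfl hterm, Finset.sum_add_distrib]
        congr 1
        · rw [Finset.sum_range_succ']
          have h00 : iMul F v (Pf l₁ 0) = 0 := by
            rw [hPf0]
            exact CliffordAlgebra.contractLeft_one _ _
          rw [h00, zero_mul, add_zero, Finset.mul_sum]
          refine Finset.sum_congr rfl fun i hi => ?_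
          rw [hPf l₁ h₁ i v, Nat.succ_sub_succ, mul_assoc]
        · rw [Finset.sum_range_succ]
          have h00 : iMul F v (Pf l₂ ((k+1) - (k+1))) = 0 := by
            rw [Nat.sub_self, hPf0]
            exact CliffordAlgebra.contractLeft_one _ _
          rw [h00, mul_zero, add_zero, Finset.mul_sum]
          refine Finset.sum_congr rfl fun j hj => ?_
          have hjk : j ≤ k := Nat.lt_succ_iff.mp (Finset.mem_range.mp hj)
          have hsub : k + 1 - j = (k - j) + 1 := by omega
          rw [hsub, hPf l₂ h₂ (k-j) v]
          obtain ⟨a, ha⟩ := contract_sq_mem_range (Module.Dual.eval F V v) h₂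
          have hcomm : Pf l₁ j * iMul F v l₂ = iMul F v l₂ * Pf l₁ j := by
            rw [← hCeq l₂, ← ha]
            exact even_mul_ι_comm (hPfmem' l₁ h₁ j) a
          rw [← mul_assoc, hcomm, mul_assoc]
      rw [hL, hR, map_add, add_mul, sub_eq_zero]
    have hx : Pf (l₁ + l₂) (k+1) - S (k+1) = 0 :=
      eq_zero_of_contract_eq_zero (Module.finBasis F W) _ h0 hc
    exact sub_eq_zero.mp hx
end

section
/- If the characteristic of F does not divide k!, then the k-th Pfaffian of a 2-form λ equals λ^k / k!, i.e., k! · Pf_k(λ) = λ ∧ λ ∧ ⋯ ∧ λ (k factors). -/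
open ExteriorAlgebra

set_option synthInstance.maxHeartbeats 1000000

section Aux
variable {F : Type*} [Field F] {W : Type*} [AddCommGroup W] [Module F W]

local notation "p" => (LinearMap.range (ι F : W →ₗ[F] ExteriorAlgebra F W))
local notation "c[" d "]" => (CliffordAlgebra.contractLeft d :
  ExteriorAlgebra F W →ₗ[F] ExteriorAlgebra F W)

lemma swap_ι (x y : W) : ι F x * ι F y = -(ι F y * ι F x) :=
  eq_neg_of_add_eq_zero_left (ι_add_mul_swap x y)

lemma mul_algebraMap_eq_smul (x : ExteriorAlgebra F W) (r : F) :
    x * algebraMap F (ExteriorAlgebra F W) r = r • x := by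
  rw [← Algebra.commutes, ← Algebra.smul_def]

/-- contraction by a functional vanishing on `W₀` kills powers of `W₀`-image. -/
lemma contract_vanish (W₀ : Submodule F W) (d : Module.Dual F W)
    (hd : ∀ w ∈ W₀, d w = 0) {n : ℕ} {x : ExteriorAlgebra F W}
    (hx : x ∈ (W₀.map (ι F : W →ₗ[F] ExteriorAlgebra F W)) ^ n) :
    c[d] x = 0 := by
  refine Submodule.pow_induction_on_left _ (fun r => ?_) (fun a b ha hb => ?_)
    (fun m hm y hy => ?_) hx
  · exact CliffordAlgebra.contractLeft_algebraMap _ _ r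
  · rw [map_add, ha, hb, add_zero]
  · obtain ⟨w, hw, rfl⟩ := hm
    rw [CliffordAlgebra.contractLeft_ι_mul, hy, hd w hw, zero_smul, mul_zero, sub_zero]

/-- decomposition of a power of `W₀ ⊔ span e` -/
lemma decomp (W₀ : Submodule F W) (e : W) {n : ℕ} {x : ExteriorAlgebra F W}
    (hx : x ∈ ((W₀ ⊔ Submodule.span F {e}).map (ι F : W →ₗ[F] ExteriorAlgebra F W)) ^ n) :
    ∃ a ∈ (W₀.map (ι F : W →ₗ[F] ExteriorAlgebra F W)) ^ n,
      ∃ c ∈ (W₀.map (ι F : W →ₗ[F] ExteriorAlgebra F W)) ^ (n - 1),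
        x = a + ι F e * c ∧ (n = 0 → c = 0) := by
  induction hx using Submodule.pow_induction_on_left' with
  | algebraMap r =>
    exact ⟨algebraMap F _ r, Submodule.algebraMap_mem r, 0, Submodule.zero_mem _,
      by simp, fun _ => rfl⟩
  | add x y i hx hy ihx ihy =>
    obtain ⟨a, ha, c, hc, rfl, h0⟩ := ihx
    obtain ⟨a', ha', c', hc', rfl, h0'⟩ := ihy
    exact ⟨a + a', add_mem ha ha', c + c', add_mem hc hc',
      by rw [mul_add]; abel, fun hi => by rw [h0 hi, h0' hi, add_zero]⟩
  | mem_mul m hm i y hy ih =>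
    obtain ⟨a, ha, c, hc, rfl, h0⟩ := ih
    obtain ⟨w, hw, rfl⟩ := hm
    obtain ⟨w', hw', we, hwe, rfl⟩ := Submodule.mem_sup.mp hw
    obtain ⟨t, rfl⟩ := Submodule.mem_span_singleton.mp hwe
    have hq : ι F w' * ι F e = -(ι F e * ι F w') := swap_ι w' e
    have key : ι F (w' + t • e) * (a + ι F e * c)
        = ι F w' * a + ι F e * (t • a - ι F w' * c) := by
      rw [map_add, map_smul]
      rw [add_mul, mul_add, mul_add, smul_mul_assoc, smul_mul_assoc,
        ← mul_assoc, ← mul_assoc, hq, ι_sq_zero, zero_mul, smul_zero, add_zero,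
        mul_sub, mul_smul_comm, neg_mul, mul_assoc]
      abel
    have hιw' : ι F w' ∈ W₀.map (ι F : W →ₗ[F] ExteriorAlgebra F W) :=
      ⟨w', hw', rfl⟩
    refine ⟨ι F w' * a, ?_, t • a - ι F w' * c, ?_, key, by omega⟩
    · rw [pow_succ']
      exact Submodule.mul_mem_mul hιw' ha
    · rw [Nat.succ_sub_one]
      refine sub_mem (Submodule.smul_mem _ _ ha) ?_
      rcases Nat.eq_zero_or_pos i with hi | hi
      · rw [h0 hi, mul_zero]; exact Submodule.zero_mem _
      · obtain ⟨j, rfl⟩ := Nat.exists_eq_add_of_le hi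
        have hc' : c ∈ (W₀.map (ι F : W →ₗ[F] ExteriorAlgebra F W)) ^ j := by
          simpa using hc
        rw [add_comm, pow_succ']
        exact Submodule.mul_mem_mul hιw' hc'

end Aux

section Aux2
variable {F : Type*} [Field F] {W : Type*} [AddCommGroup W] [Module F W]

lemma contraction_injective [FiniteDimensional F W] {n : ℕ} (hn : n ≠ 0)
    {x : ExteriorAlgebra F W} (hx : x ∈ ⋀[F]^n W)
    (h : ∀ d : Module.Dual F W, CliffordAlgebra.contractLeft d x = 0) : x = 0 := by
  set m := Module.finrank F W with hm
  let b : Module.Basis (Fin m) F W := Module.finBasis F W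
  let Wj : ℕ → Submodule F W := fun j => Submodule.span F (b '' {i | (i : ℕ) < j})
  suffices H : ∀ j, ∀ n : ℕ, n ≠ 0 → ∀ x : ExteriorAlgebra F W,
      x ∈ ((Wj j).map (ι F : W →ₗ[F] ExteriorAlgebra F W)) ^ n →
      (∀ d : Module.Dual F W, CliffordAlgebra.contractLeft d x = 0) → x = 0 by
    refine H m n hn x ?_ h
    have htop : Wj m = ⊤ := by
      have : {i : Fin m | (i : ℕ) < m} = Set.univ := by
        ext i; simp [i.isLt]
      rw [show Wj m = Submodule.span F (b '' {i : Fin m | (i : ℕ) < m}) from rfl, this,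
        Set.image_univ, b.span_eq]
    rw [htop, Submodule.map_top]
    exact hx
  intro j
  induction j with
  | zero =>
    intro n hn x hx _
    have hbot : Wj 0 = ⊥ := by
      have : {i : Fin m | (i : ℕ) < 0} = ∅ := by ext i; simp
      rw [show Wj 0 = Submodule.span F (b '' {i : Fin m | (i : ℕ) < 0}) from rfl, this]
      simp
    rw [hbot, Submodule.map_bot] at hx
    obtain ⟨k, rfl⟩ := Nat.exists_eq_succ_of_ne_zero hn
    rw [pow_succ', Submodule.bot_mul] at hx
    simpa using hx
  | succ j ih =>
    intro n hn x hx hc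
    by_cases hj : j < m
    · set e : W := b ⟨j, hj⟩ with he
      have hset : {i : Fin m | (i : ℕ) < j + 1} = insert ⟨j, hj⟩ {i : Fin m | (i : ℕ) < j} := by
        ext i
        simp only [Set.mem_setOf_eq, Set.mem_insert_iff, Nat.lt_succ_iff_lt_or_eq, Fin.ext_iff]
        tauto
      have hWj : Wj (j + 1) = Wj j ⊔ Submodule.span F {e} := by
        rw [show Wj (j+1) = Submodule.span F (b '' {i : Fin m | (i : ℕ) < j + 1}) from rfl,
          hset, Set.image_insert_eq, Submodule.span_insert, sup_comm]
      rw [hWj] at hx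
      obtain ⟨a, ha, c, hcmem, rfl, -⟩ := decomp (Wj j) e hx
      set ε : Module.Dual F W := b.coord ⟨j, hj⟩ with hε
      have hεv : ∀ w ∈ Wj j, ε w = 0 := by
        intro w hw
        induction hw using Submodule.span_induction with
        | mem w hw =>
          obtain ⟨i, hi, rfl⟩ := hw
          have hne : i ≠ ⟨j, hj⟩ := by
            intro hcon; rw [hcon] at hi; exact absurd hi (lt_irrefl j)
          simp [hε, Module.Basis.coord_apply, Module.Basis.repr_self_apply, hne]
        | zero => simp
        | add u v _ _ hu hv => simp [hu, hv]
        | smul t u _ hu => simp [hu]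
      have hεe : ε e = 1 := by
        simp [hε, he, Module.Basis.coord_apply, Module.Basis.repr_self_apply]
      have hc0 : c = 0 := by
        have h0 := hc ε
        rw [map_add, contract_vanish (Wj j) ε hεv ha, zero_add,
          CliffordAlgebra.contractLeft_ι_mul, hεe, one_smul,
          contract_vanish (Wj j) ε hεv hcmem, mul_zero, sub_zero] at h0
        exact h0
      rw [hc0, mul_zero, add_zero]
      refine ih n hn a ha fun d => ?_
      have hcd := hc d
      rwa [hc0, mul_zero, add_zero] at hcd
    · have hWeq : Wj (j + 1) = Wj j := by
        have : {i : Fin m | (i : ℕ) < j + 1} = {i : Fin m | (i : ℕ) < j} := by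
          ext i
          have := i.isLt
          simp only [Set.mem_setOf_eq]
          omega
        rw [show Wj (j+1) = Submodule.span F (b '' {i : Fin m | (i : ℕ) < j + 1}) from rfl, this]
      rw [hWeq] at hx
      exact ih n hn x hx hc

end Aux2

section Aux3
variable {F : Type*} [Field F] {W : Type*} [AddCommGroup W] [Module F W]

lemma contract_sq (d : Module.Dual F W) (u w : W) :
    CliffordAlgebra.contractLeft d (ι F u * ι F w) = d u • ι F w - d w • ι F u := by
  rw [CliffordAlgebra.contractLeft_ι_mul, CliffordAlgebra.contractLeft_ι,
    mul_algebraMap_eq_smul]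

lemma contract_two_mem (d : Module.Dual F W) {l : ExteriorAlgebra F W}
    (hl : l ∈ ⋀[F]^2 W) :
    CliffordAlgebra.contractLeft d l ∈ LinearMap.range (ι F : W →ₗ[F] ExteriorAlgebra F W) := by
  replace hl : l ∈ LinearMap.range (ι F : W →ₗ[F] ExteriorAlgebra F W) *
      LinearMap.range (ι F : W →ₗ[F] ExteriorAlgebra F W) := by
    rw [← pow_two]; exact hl
  refine Submodule.mul_induction_on hl (fun u hu w hw => ?_) (fun a b ha hb => ?_)
  · obtain ⟨u, rfl⟩ := hu
    obtain ⟨w, rfl⟩ := hw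
    rw [contract_sq]
    exact sub_mem (Submodule.smul_mem _ _ ⟨w, rfl⟩) (Submodule.smul_mem _ _ ⟨u, rfl⟩)
  · rw [map_add]
    exact add_mem ha hb

lemma commute_two {l : ExteriorAlgebra F W} (hl : l ∈ ⋀[F]^2 W)
    {y : ExteriorAlgebra F W}
    (hy : y ∈ LinearMap.range (ι F : W →ₗ[F] ExteriorAlgebra F W)) :
    l * y = y * l := by
  obtain ⟨v, rfl⟩ := hy
  replace hl : l ∈ LinearMap.range (ι F : W →ₗ[F] ExteriorAlgebra F W) *
      LinearMap.range (ι F : W →ₗ[F] ExteriorAlgebra F W) := by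
    rw [← pow_two]; exact hl
  refine Submodule.mul_induction_on hl (fun a ha c hc => ?_) (fun a c ha hc => ?_)
  · obtain ⟨u, rfl⟩ := ha
    obtain ⟨w, rfl⟩ := hc
    rw [mul_assoc, swap_ι w v, mul_neg, ← mul_assoc, swap_ι u v, neg_mul, neg_neg, mul_assoc]
  · rw [add_mul, mul_add, ha, hc]

lemma deriv_two {l : ExteriorAlgebra F W} (hl : l ∈ ⋀[F]^2 W) (d : Module.Dual F W)
    (y : ExteriorAlgebra F W) :
    CliffordAlgebra.contractLeft d (l * y)
      = CliffordAlgebra.contractLeft d l * y + l * CliffordAlgebra.contractLeft d y := by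
  replace hl : l ∈ LinearMap.range (ι F : W →ₗ[F] ExteriorAlgebra F W) *
      LinearMap.range (ι F : W →ₗ[F] ExteriorAlgebra F W) := by
    rw [← pow_two]; exact hl
  revert y
  refine Submodule.mul_induction_on
    (C := fun l => ∀ y : ExteriorAlgebra F W, CliffordAlgebra.contractLeft d (l * y)
      = CliffordAlgebra.contractLeft d l * y + l * CliffordAlgebra.contractLeft d y)
    hl (fun a ha c hc => ?_) (fun a c ha hc => ?_)
  · obtain ⟨u, rfl⟩ := ha
    obtain ⟨w, rfl⟩ := hc
    intro y
    rw [mul_assoc, CliffordAlgebra.contractLeft_ι_mul, CliffordAlgebra.contractLeft_ι_mul,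
      contract_sq, sub_mul, smul_mul_assoc, smul_mul_assoc, mul_sub, mul_smul_comm,
      mul_assoc]
    abel
  · intro y
    rw [add_mul, map_add, ha y, hc y, map_add, add_mul, add_mul]
    abel

lemma contract_pow {l : ExteriorAlgebra F W} (hl : l ∈ ⋀[F]^2 W) (d : Module.Dual F W)
    (k : ℕ) :
    CliffordAlgebra.contractLeft d (l ^ (k + 1))
      = (k + 1) • (CliffordAlgebra.contractLeft d l * l ^ k) := by
  induction k with
  | zero => simp
  | succ k ih =>
    rw [pow_succ' l (k + 1), deriv_two hl, ih, mul_smul_comm, ← mul_assoc,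
      commute_two hl (contract_two_mem d hl), mul_assoc, ← pow_succ']
    rw [add_comm, ← succ_nsmul]

end Aux3

set_option maxHeartbeats 1000000 in
/-- If the characteristic of `F` does not divide `k!` (i.e. `k! ≠ 0` in `F`),
then `k! • Pf_k(λ) = λ^k` (the `k`-fold wedge power of `λ`). -/
theorem pfaffian_eq_pow_div_factorial (F : Type*) [Field F] (V : Type*) [AddCommGroup V]
    [Module F V] [FiniteDimensional F V]
    (Pf : ExteriorAlgebra F (Module.Dual F V) → ℕ → ExteriorAlgebra F (Module.Dual F V))
    (hPf0 : ∀ l, Pf l 0 = 1)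
    (hPfmem : ∀ l ∈ ⋀[F]^2 (Module.Dual F V), ∀ k : ℕ, 1 ≤ k →
      Pf l k ∈ ⋀[F]^(2 * k) (Module.Dual F V))
    (hPf : ∀ l ∈ ⋀[F]^2 (Module.Dual F V), ∀ (k : ℕ) (v : V),
      iMul F v (Pf l (k + 1)) = iMul F v l * Pf l k)
    (lam : ExteriorAlgebra F (Module.Dual F V))
    (hlam2 : lam ∈ ⋀[F]^2 (Module.Dual F V)) (k : ℕ)
    (hchar : (Nat.factorial k : F) ≠ 0) :
    (Nat.factorial k : F) • Pf lam k = lam ^ k := by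
  induction k with
  | zero => simp [hPf0, Nat.factorial]
  | succ k ih =>
    have hk : ((Nat.factorial k : F)) ≠ 0 := by
      intro h0
      apply hchar
      rw [Nat.factorial_succ, Nat.cast_mul, h0, mul_zero]
    have IH := ih hk
    have hmem : (Nat.factorial (k+1) : F) • Pf lam (k+1) - lam ^ (k+1)
        ∈ ⋀[F]^(2*(k+1)) (Module.Dual F V) := by
      refine sub_mem (Submodule.smul_mem _ _ (hPfmem lam hlam2 (k+1) (by omega))) ?_
      have : lam ^ (k+1) ∈ (LinearMap.range
          (ι F : Module.Dual F V →ₗ[F] ExteriorAlgebra F (Module.Dual F V))) ^ (2*(k+1)) := by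
        rw [pow_mul]
        exact Submodule.pow_mem_pow _ hlam2 (k+1)
      exact this
    have hcontr : ∀ dd : Module.Dual F (Module.Dual F V),
        CliffordAlgebra.contractLeft dd
          ((Nat.factorial (k+1) : F) • Pf lam (k+1) - lam ^ (k+1)) = 0 := by
      intro dd
      obtain ⟨v, rfl⟩ : ∃ v : V, Module.Dual.eval F V v = dd :=
        ⟨(Module.evalEquiv F V).symm dd, by
          rw [← Module.evalEquiv_apply, LinearEquiv.apply_symm_apply]⟩
      have h1 : CliffordAlgebra.contractLeft (Module.Dual.eval F V v) (Pf lam (k+1))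
          = CliffordAlgebra.contractLeft (Module.Dual.eval F V v) lam * Pf lam k := by
        have := hPf lam hlam2 k v
        rw [iMul] at this
        exact this
      rw [map_sub, map_smul, h1, contract_pow hlam2 _ k,
        Nat.factorial_succ, Nat.cast_mul, mul_smul, ← Nat.cast_smul_eq_nsmul F,
        ← mul_smul_comm, IH, sub_self]
    rw [← sub_eq_zero]
    exact contraction_injective (by omega) hmem hcontr
end

section
/- Let ω be a nonzero alternating 2-form on F_q^m of rank 2r, viewed as a codeword of the Grassmann code C(2,m) via evaluation on Plücker coordinates of 2-planes. Then the Hamming weight of ω, i.e., the number of 2-dimensional subspaces Λ ⊆ F_q^m with ω(v_1, v_2) ≠ 0 for a basis {v_1,v_2} of Λ, equals q^{2(m-r-1)} (q^{2r} − 1)/(q^2 − 1). -/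
set_option linter.unusedSectionVars false
open Finset Module Submodule LinearMap

section aux
variable {F : Type*} [Field F] [Fintype F] {m : ℕ}
variable (ω : (Fin m → F) [⋀^Fin 2]→ₗ[F] F)

noncomputable def Bform : (Fin m → F) →ₗ[F] (Fin m → F) →ₗ[F] F :=
  LinearMap.mk₂ F (fun v w => ω ![v, w])
    (fun a b c => by have := ω.map_update_add ![a, c] 0 a b; simpa [show ∀ x, Function.update ![a,c] 0 x = ![x,c] from fun x => by funext i; fin_cases i <;> simp] using this)
    (fun r a c => by have := ω.map_update_smul ![a, c] 0 r a; simpa [show ∀ x, Function.update ![a,c] 0 x = ![x,c] from fun x => by funext i; fin_cases i <;> simp] using this)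
    (fun a b c => by have := ω.map_update_add ![a, b] 1 b c; simpa [show ∀ x, Function.update ![a,b] 1 x = ![a,x] from fun x => by funext i; fin_cases i <;> simp] using this)
    (fun r a c => by have := ω.map_update_smul ![a, c] 1 r c; simpa [show ∀ x, Function.update ![a,c] 1 x = ![a,x] from fun x => by funext i; fin_cases i <;> simp] using this)

@[simp] lemma Bform_apply (v w : Fin m → F) : Bform ω v w = ω ![v, w] := rfl

noncomputable def fmap : (Fin m → F) →ₗ[F] (Fin m → F) :=
  LinearMap.pi (fun j => (Bform ω).flip (Pi.single j 1))

lemma fmap_eq : fmap ω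
    = (Matrix.of fun i j : Fin m => ω ![Pi.single i 1, Pi.single j 1]).transpose.mulVecLin := by
  refine LinearMap.ext fun v => funext fun j => ?_
  show Bform ω v (Pi.single j 1) = _
  conv_lhs => rw [← Finset.univ_sum_single v]
  rw [map_sum, LinearMap.sum_apply]
  simp only [Matrix.mulVecLin_apply, Matrix.mulVec, dotProduct, Matrix.transpose_apply,
    Matrix.of_apply]
  refine Finset.sum_congr rfl fun i _ => ?_
  have : Pi.single i (v i) = (v i) • (Pi.single i (1 : F) : Fin m → F) := by
    rw [← Pi.single_smul, smul_eq_mul, mul_one]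
  rw [this, map_smul]
  simp [mul_comm]

lemma mem_ker_fmap_iff (v : Fin m → F) :
    v ∈ ker (fmap ω) ↔ ∀ w, Bform ω v w = 0 := by
  constructor
  · intro h w
    have hj : ∀ j, Bform ω v (Pi.single j 1) = 0 := fun j => congrFun (mem_ker.mp h) j
    conv_lhs => rw [← Finset.univ_sum_single w, map_sum]
    refine Finset.sum_eq_zero fun j _ => ?_
    have : Pi.single j (w j) = (w j) • (Pi.single j (1 : F) : Fin m → F) := by
      rw [← Pi.single_smul, smul_eq_mul, mul_one]
    rw [this, map_smul, hj, smul_zero]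
  · intro h
    exact mem_ker.mpr (funext fun j => h _)


lemma finrank_ker_functional {W : Type*} [AddCommGroup W] [Module F W] [FiniteDimensional F W]
    (g : W →ₗ[F] F) (hg : g ≠ 0) : finrank F (ker g) = finrank F W - 1 := by
  have hsurj : Function.Surjective g := by
    obtain ⟨x, hx⟩ : ∃ x, g x ≠ 0 := by
      by_contra h; push_neg at h; exact hg (LinearMap.ext fun x => h x)
    intro c
    refine ⟨(c * (g x)⁻¹) • x, ?_⟩
    rw [map_smul, smul_eq_mul]
    field_simp
  have h1 : finrank F (range g) = 1 := by
    rw [LinearMap.range_eq_top.mpr hsurj, finrank_top, finrank_self]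
  have h2 := g.finrank_range_add_finrank_ker
  omega

lemma count_ne_on (Λ : Submodule F (Fin m → F)) (g : (Fin m → F) →ₗ[F] F)
    (h : ∃ w ∈ Λ, g w ≠ 0) :
    Nat.card {w : Fin m → F // w ∈ Λ ∧ g w ≠ 0}
      = Fintype.card F ^ finrank F Λ - Fintype.card F ^ (finrank F Λ - 1) := by
  classical
  set g' : Λ →ₗ[F] F := g.comp Λ.subtype with hg'def
  have hg0 : g' ≠ 0 := by
    obtain ⟨w, hw, hne⟩ := h
    intro hc
    exact hne (by simpa [hg'def] using LinearMap.congr_fun hc ⟨w, hw⟩)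
  have e1 : {w : Fin m → F // w ∈ Λ ∧ g w ≠ 0} ≃ {x : Λ // ¬ (g' x = 0)} :=
    { toFun := fun w => ⟨⟨w.1, w.2.1⟩, w.2.2⟩
      invFun := fun x => ⟨x.1.1, x.1.2, x.2⟩
      left_inv := fun w => rfl
      right_inv := fun x => rfl }
  rw [Nat.card_eq_fintype_card, Fintype.card_congr e1, Fintype.card_subtype_compl]
  have c1 : Fintype.card Λ = Fintype.card F ^ finrank F Λ := card_eq_pow_finrank (K := F)
  have e2 : {x : Λ // g' x = 0} ≃ ker g' :=
    Equiv.subtypeEquivRight (fun x => (LinearMap.mem_ker).symm)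
  have c2 : Fintype.card {x : Λ // g' x = 0} = Fintype.card F ^ (finrank F Λ - 1) := by
    rw [Fintype.card_congr e2, card_eq_pow_finrank (K := F), finrank_ker_functional g' hg0]
  rw [c1, c2]

lemma Bform_self (v : Fin m → F) : Bform ω v v = 0 :=
  ω.map_eq_zero_of_eq ![v, v] (by simp : (![v,v] : Fin 2 → _) 0 = ![v,v] 1) (by decide)

lemma Bform_skew (v w : Fin m → F) : Bform ω v w = - Bform ω w v := by
  have h := ω.map_swap ![w, v] (i := 0) (j := 1) (by decide)
  have e : (![w, v] ∘ Equiv.swap (0 : Fin 2) 1) = ![v, w] := by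
    funext i; fin_cases i <;> simp [Equiv.swap_apply_left, Equiv.swap_apply_right]
  rw [e] at h
  simp only [Bform_apply, h, neg_neg]

lemma pair_card (P : (Fin m → F) → (Fin m → F) → Prop) [∀ v w, Decidable (P v w)] :
    Fintype.card {p : (Fin m → F) × (Fin m → F) // P p.1 p.2}
      = ∑ v : Fin m → F, Fintype.card {w // P v w} := by
  rw [Fintype.card_congr (Equiv.subtypeProdEquivSigmaSubtype P), Fintype.card_sigma]

lemma indep_of_B_ne (v w : Fin m → F) (h : Bform ω v w ≠ 0) :
    LinearIndependent F ![v, w] := by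
  have hw : w ≠ 0 := fun hw => h (by rw [hw, map_zero])
  rw [LinearIndependent.pair_iff]
  intro s t hst
  have h1 : Bform ω (s • v + t • w) w = 0 := by rw [hst, map_zero]; rfl
  simp only [map_add, map_smul, LinearMap.add_apply, LinearMap.smul_apply, Bform_self,
    smul_eq_mul, mul_zero, add_zero] at h1
  have hs : s = 0 := by
    rcases mul_eq_zero.mp h1 with hs | hc
    · exact hs
    · exact absurd hc h
  subst hs
  rw [zero_smul, zero_add] at hst
  rcases smul_eq_zero.mp hst with ht | hw0
  · exact ⟨rfl, ht⟩
  · exact absurd hw0 hw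

lemma finrank_span_pair' (v w : Fin m → F) (h : Bform ω v w ≠ 0) :
    finrank F (span F {v, w}) = 2 := by
  have hi := indep_of_B_ne ω v w h
  have hr : Set.range ![v, w] = {v, w} := by
    simp only [Matrix.range_cons, Matrix.range_empty, Set.union_empty, Set.union_singleton]
    exact Set.pair_comm w v
  have hc := finrank_span_eq_card hi
  rw [hr, Fintype.card_fin] at hc
  exact hc

lemma exists_B_ne (Λ : Submodule F (Fin m → F)) (hfin : finrank F Λ = 2)
    (v₁ v₂ : Fin m → F) (h1 : v₁ ∈ Λ) (h2 : v₂ ∈ Λ) (hB : Bform ω v₁ v₂ ≠ 0)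
    (v : Fin m → F) (hv : v ∈ Λ) (hv0 : v ≠ 0) : ∃ w ∈ Λ, Bform ω v w ≠ 0 := by
  have hspan : span F {v₁, v₂} = Λ := by
    apply Submodule.eq_of_le_of_finrank_eq
    · rw [span_le]
      intro x hx
      simp only [Set.mem_insert_iff, Set.mem_singleton_iff] at hx
      rcases hx with rfl | rfl <;> assumption
    · rw [finrank_span_pair' ω v₁ v₂ hB, hfin]
  have hv' : v ∈ span F {v₁, v₂} := hspan ▸ hv
  obtain ⟨a, c, hac⟩ := Submodule.mem_span_pair.mp hv'
  by_cases ha : a = 0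
  · have hc : c ≠ 0 := by
      rintro rfl
      rw [ha, zero_smul, zero_smul, add_zero] at hac
      exact hv0 hac.symm
    refine ⟨v₁, h1, ?_⟩
    rw [← hac]
    simp only [map_add, map_smul, LinearMap.add_apply, LinearMap.smul_apply, Bform_self,
      smul_eq_mul, ha, zero_mul, mul_zero, zero_add]
    rw [Bform_skew ω v₂ v₁]
    simpa using mul_ne_zero hc (neg_ne_zero.mpr hB)
  · refine ⟨v₂, h2, ?_⟩
    rw [← hac]
    simp only [map_add, map_smul, LinearMap.add_apply, LinearMap.smul_apply, Bform_self,
      smul_eq_mul, mul_zero, add_zero]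
    exact mul_ne_zero ha hB

open scoped Classical in
lemma plane_pair_count (Λ : Submodule F (Fin m → F)) (hfin : finrank F Λ = 2)
    (v₁ v₂ : Fin m → F) (h1 : v₁ ∈ Λ) (h2 : v₂ ∈ Λ) (hB : Bform ω v₁ v₂ ≠ 0) :
    Fintype.card {p : (Fin m → F) × (Fin m → F) //
        p.1 ∈ Λ ∧ p.2 ∈ Λ ∧ Bform ω p.1 p.2 ≠ 0}
      = (Fintype.card F ^ 2 - 1) * (Fintype.card F ^ 2 - Fintype.card F) := by
  rw [pair_card (fun v w => v ∈ Λ ∧ w ∈ Λ ∧ Bform ω v w ≠ 0)]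
  have hterm : ∀ v : Fin m → F, Fintype.card {w // v ∈ Λ ∧ w ∈ Λ ∧ Bform ω v w ≠ 0}
      = if v ∈ Λ ∧ v ≠ 0 then (Fintype.card F ^ 2 - Fintype.card F) else 0 := by
    intro v
    by_cases hv : v ∈ Λ ∧ v ≠ 0
    · rw [if_pos hv]
      have e : {w // v ∈ Λ ∧ w ∈ Λ ∧ Bform ω v w ≠ 0} ≃ {w // w ∈ Λ ∧ Bform ω v w ≠ 0} :=
        Equiv.subtypeEquivRight (fun w => by simp [hv.1])
      rw [Fintype.card_congr e]
      have hcount := count_ne_on Λ (Bform ω v)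
        (exists_B_ne ω Λ hfin v₁ v₂ h1 h2 hB v hv.1 hv.2)
      rw [Nat.card_eq_fintype_card] at hcount
      rw [hcount, hfin]
      norm_num
    · rw [if_neg hv, Fintype.card_eq_zero_iff]
      refine ⟨fun w => ?_⟩
      push_neg at hv
      obtain ⟨hw1, hw2, hw3⟩ := w.2
      by_cases hvΛ : v ∈ Λ
      · have hz : Bform ω v = 0 := by rw [hv hvΛ]; exact map_zero _
        exact hw3 ((LinearMap.congr_fun hz w.1).trans rfl)
      · exact hvΛ hw1
  rw [Finset.sum_congr rfl (fun v _ => hterm v), Finset.sum_ite, Finset.sum_const,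
    Finset.sum_const_zero, add_zero, smul_eq_mul]
  congr 1
  have e2 : {v : Fin m → F // v ∈ Λ ∧ v ≠ 0} ≃ {x : Λ // ¬ (x = 0)} :=
    { toFun := fun v => ⟨⟨v.1, v.2.1⟩, fun h0 => v.2.2 (congrArg Subtype.val h0)⟩
      invFun := fun x => ⟨x.1.1, x.1.2, fun h0 => x.2 (Subtype.ext h0)⟩
      left_inv := fun v => rfl
      right_inv := fun x => rfl }
  rw [← Fintype.card_subtype, Fintype.card_congr e2, Fintype.card_subtype_compl,
    Fintype.card_subtype_eq, card_eq_pow_finrank (K := F) (V := Λ), hfin]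

end aux

open scoped Classical in
set_option maxHeartbeats 1000000 in
/-- **Nogin.** A nonzero alternating 2-form `ω` on `F_q^m` of rank `2r`
(the rank of its matrix in the standard basis), viewed as a codeword of the Grassmann code
`C(2,m)`, has Hamming weight — the number of 2-dimensional subspaces `Λ ⊆ F_q^m` on which
`ω` restricts to a nonzero form — equal to `q^{2(m-r-1)} (q^{2r} − 1)/(q^2 − 1)`
(stated here with the exact division cleared). -/
theorem grassmann_code_two_form_weight (F : Type*) [Field F] [Fintype F] (q m r : ℕ)
    (hq : Fintype.card F = q) (hr : 1 ≤ r)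
    (ω : (Fin m → F) [⋀^Fin 2]→ₗ[F] F) (hω : ω ≠ 0)
    (hrank : (Matrix.of fun i j : Fin m => ω ![Pi.single i 1, Pi.single j 1]).rank = 2 * r) :
    Nat.card {Λ : Submodule F (Fin m → F) // Module.finrank F Λ = 2 ∧
        ∃ v₁ ∈ Λ, ∃ v₂ ∈ Λ, ω ![v₁, v₂] ≠ 0} * (q ^ 2 - 1)
      = q ^ (2 * (m - r - 1)) * (q ^ (2 * r) - 1) := by
  classical
  subst hq
  set q := Fintype.card F with hqdef
  have hq2 : 2 ≤ q := Fintype.one_lt_card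
  set M : Matrix (Fin m) (Fin m) F :=
    Matrix.of (fun i j : Fin m => ω ![Pi.single i 1, Pi.single j 1]) with hM
  have hm2r : 2 * r ≤ m := by
    have h := M.rank_le_card_width
    rw [hrank, Fintype.card_fin] at h; exact h
  have hVrank : finrank F (Fin m → F) = m := by
    rw [Module.finrank_pi, Fintype.card_fin]
  have hrange : finrank F (LinearMap.range (fmap ω)) = 2 * r := by
    rw [fmap_eq]
    show M.transpose.rank = 2 * r
    rw [Matrix.rank_transpose, hrank]
  have hker : finrank F (LinearMap.ker (fmap ω)) = m - 2 * r := by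
    have h := (fmap ω).finrank_range_add_finrank_ker
    rw [hrange, hVrank] at h; omega
  have cardV : Fintype.card (Fin m → F) = q ^ m := by
    rw [card_eq_pow_finrank (K := F), hVrank]
  have cardK : Fintype.card (LinearMap.ker (fmap ω)) = q ^ (m - 2 * r) := by
    rw [card_eq_pow_finrank (K := F), hker]
  set S : Finset ((Fin m → F) × (Fin m → F)) :=
    Finset.univ.filter (fun p => Bform ω p.1 p.2 ≠ 0) with hS
  have claimA : S.card = (q ^ m - q ^ (m - 2 * r)) * (q ^ m - q ^ (m - 1)) := by
    rw [hS, ← Fintype.card_subtype, pair_card (fun v w => Bform ω v w ≠ 0)]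
    have hterm : ∀ v : Fin m → F, Fintype.card {w // Bform ω v w ≠ 0}
        = if v ∈ LinearMap.ker (fmap ω) then 0 else (q ^ m - q ^ (m - 1)) := by
      intro v
      by_cases hv : v ∈ LinearMap.ker (fmap ω)
      · rw [if_pos hv, Fintype.card_eq_zero_iff]
        exact ⟨fun w => w.2 ((mem_ker_fmap_iff ω v).mp hv w.1)⟩
      · rw [if_neg hv]
        have hx : ∃ w ∈ (⊤ : Submodule F (Fin m → F)), Bform ω v w ≠ 0 := by
          by_contra hc; push_neg at hc
          exact hv ((mem_ker_fmap_iff ω v).mpr (fun w => hc w trivial))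
        have e : {w // Bform ω v w ≠ 0}
            ≃ {w // w ∈ (⊤ : Submodule F (Fin m → F)) ∧ Bform ω v w ≠ 0} :=
          Equiv.subtypeEquivRight (fun w => by simp)
        rw [Fintype.card_congr e]
        have hcount := count_ne_on (⊤ : Submodule F (Fin m → F)) (Bform ω v) hx
        rw [Nat.card_eq_fintype_card] at hcount
        rw [hcount, finrank_top, hVrank]
    rw [Finset.sum_congr rfl (fun v _ => hterm v), Finset.sum_ite]
    simp only [smul_zero, mul_zero, zero_add, Finset.sum_const, smul_eq_mul]
    congr 1
    rw [← Fintype.card_subtype, Fintype.card_subtype_compl, cardV, cardK]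
  set t : Finset (Submodule F (Fin m → F)) := S.image (fun p => span F {p.1, p.2}) with htdef
  have ht : ∀ Λ : Submodule F (Fin m → F),
      Λ ∈ t ↔ (finrank F Λ = 2 ∧ ∃ v₁ ∈ Λ, ∃ v₂ ∈ Λ, ω ![v₁, v₂] ≠ 0) := by
    intro Λ
    constructor
    · intro hΛ
      obtain ⟨p, hp, rfl⟩ := Finset.mem_image.mp hΛ
      have hpB : Bform ω p.1 p.2 ≠ 0 := (Finset.mem_filter.mp hp).2
      refine ⟨finrank_span_pair' ω _ _ hpB, p.1, ?_, p.2, ?_, hpB⟩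
      · exact subset_span (Set.mem_insert _ _)
      · exact subset_span (by simp)
    · rintro ⟨hfin, v₁, hm1, v₂, hm2, hne⟩
      have hB : Bform ω v₁ v₂ ≠ 0 := hne
      have hsp : span F {v₁, v₂} = Λ := by
        apply Submodule.eq_of_le_of_finrank_eq
        · rw [span_le]; intro x hx
          simp only [Set.mem_insert_iff, Set.mem_singleton_iff] at hx
          rcases hx with rfl | rfl <;> assumption
        · rw [finrank_span_pair' ω _ _ hB, hfin]
      have hmemS : (v₁, v₂) ∈ S := by
        rw [hS]
        exact Finset.mem_filter.mpr ⟨Finset.mem_univ _, hB⟩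
      have himg := Finset.mem_image_of_mem (fun p => span F {p.1, p.2}) hmemS
      rw [← hsp, htdef]
      exact himg
  have claimB : S.card = t.card * ((q ^ 2 - 1) * (q ^ 2 - q)) := by
    rw [Finset.card_eq_sum_card_fiberwise
      (fun p hp => Finset.mem_image_of_mem (fun p => span F {p.1, p.2}) hp)]
    have hfibcard : ∀ Λ ∈ t,
        (S.filter (fun p => span F {p.1, p.2} = Λ)).card = (q ^ 2 - 1) * (q ^ 2 - q) := by
      intro Λ hΛ
      obtain ⟨hfin, v₁, hm1, v₂, hm2, hne⟩ := (ht Λ).mp hΛ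
      have hfib : S.filter (fun p => span F {p.1, p.2} = Λ)
          = Finset.univ.filter (fun p => p.1 ∈ Λ ∧ p.2 ∈ Λ ∧ Bform ω p.1 p.2 ≠ 0) := by
        ext p
        simp only [Finset.mem_filter, Finset.mem_univ, true_and, hS]
        constructor
        · rintro ⟨hpB, rfl⟩
          exact ⟨subset_span (Set.mem_insert _ _), subset_span (by simp), hpB⟩
        · rintro ⟨hp1, hp2, hpB⟩
          refine ⟨hpB, ?_⟩
          apply Submodule.eq_of_le_of_finrank_eq
          · rw [span_le]; intro x hx
            simp only [Set.mem_insert_iff, Set.mem_singleton_iff] at hx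
            rcases hx with rfl | rfl <;> assumption
          · rw [finrank_span_pair' ω _ _ hpB, hfin]
      rw [hfib, ← Fintype.card_subtype]
      exact plane_pair_count ω Λ hfin v₁ v₂ hm1 hm2 hne
    rw [Finset.sum_congr rfl hfibcard, Finset.sum_const, smul_eq_mul]
  have hN : Nat.card {Λ : Submodule F (Fin m → F) // finrank F Λ = 2 ∧
      ∃ v₁ ∈ Λ, ∃ v₂ ∈ Λ, ω ![v₁, v₂] ≠ 0} = t.card := by
    rw [Nat.card_congr (Equiv.subtypeEquivRight (fun Λ => (ht Λ).symm)),
      Nat.card_eq_fintype_card, Fintype.card_coe]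
  have key : t.card * ((q ^ 2 - 1) * (q ^ 2 - q))
      = (q ^ m - q ^ (m - 2 * r)) * (q ^ m - q ^ (m - 1)) := by
    rw [← claimB, claimA]
  rw [hN]
  obtain ⟨s, rfl⟩ : ∃ s, r = s + 1 := ⟨r - 1, by omega⟩
  obtain ⟨k, rfl⟩ : ∃ k, m = 2 * (s + 1) + k := ⟨m - 2 * (s + 1), by omega⟩
  have hqq : 0 < q ^ 2 - q := by
    have h1 : q * 2 ≤ q * q := Nat.mul_le_mul_left q hq2
    have h2 : q ^ 2 = q * q := sq q
    omega
  apply Nat.eq_of_mul_eq_mul_right hqq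
  rw [mul_assoc t.card, key]
  have h1le : 1 ≤ q := by omega
  have e1 : 2 * (s + 1) + k - 2 * (s + 1) = k := by omega
  have e2 : 2 * (s + 1) + k - 1 = 2 * s + k + 1 := by omega
  have e3 : 2 * (s + 1) + k - (s + 1) - 1 = s + k := by omega
  rw [e1, e2, e3]
  have l1 : q ^ k ≤ q ^ (2 * (s + 1) + k) := Nat.pow_le_pow_right h1le (by omega)
  have l2 : q ^ (2 * s + k + 1) ≤ q ^ (2 * (s + 1) + k) := Nat.pow_le_pow_right h1le (by omega)
  have l3 : 1 ≤ q ^ (2 * (s + 1)) := Nat.one_le_pow _ _ (by omega)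
  have l4 : q ≤ q ^ 2 := by
    calc q = q ^ 1 := (pow_one q).symm
    _ ≤ q ^ 2 := Nat.pow_le_pow_right h1le one_le_two
  have l5 : 1 ≤ q ^ 2 := Nat.one_le_pow _ _ (by omega)
  zify [l1, l2, l3, l4, l5]
  ring
end

section
/- Let ω be a 3-form on F_q^m whose radical ker(φ_ω) = {v : ι_v ω = 0} has dimension r, and let ω̃ be the restriction of ω to a complement W of the radical (so ω̃ is a non-degenerate 3-form on W ≅ F_q^{m-r}). Then wt(ω) = q^{3r} · wt(ω̃), where wt denotes the number of 3-dimensional subspaces on which the form is nonzero. -/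
/-- The weight of a 3-form: the number of 3-dimensional subspaces on which it restricts to a
nonzero alternating form. -/
noncomputable def wt3 {F : Type*} [Field F] {V : Type*} [AddCommGroup V] [Module F V]
    (ω : V [⋀^Fin 3]→ₗ[F] F) : ℕ :=
  Nat.card {Λ : Submodule F V // Module.finrank F Λ = 3 ∧
    ∃ v₁ ∈ Λ, ∃ v₂ ∈ Λ, ∃ v₃ ∈ Λ, ω ![v₁, v₂, v₃] ≠ 0}

section Auxiliary

open Module Submodule


section helpers
variable {F : Type*} [Field F] {V : Type*} [AddCommGroup V] [Module F V]
  (ω : V [⋀^Fin 3]→ₗ[F] F)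

lemma tri_swap01 (x y z : V) : ω ![x, y, z] = -ω ![y, x, z] := by
  have h := ω.map_swap ![y, x, z] (show (0:Fin 3) ≠ 1 by decide)
  have e : (![y, x, z] ∘ Equiv.swap (0:Fin 3) 1) = ![x, y, z] := by
    funext i; fin_cases i <;> simp [Equiv.swap_apply_of_ne_of_ne]
  rw [e] at h; rw [h]

lemma tri_swap02 (x y z : V) : ω ![x, y, z] = -ω ![z, y, x] := by
  have h := ω.map_swap ![z, y, x] (show (0:Fin 3) ≠ 2 by decide)
  have e : (![z, y, x] ∘ Equiv.swap (0:Fin 3) 2) = ![x, y, z] := by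
    funext i; fin_cases i <;> simp [Equiv.swap_apply_of_ne_of_ne]
  rw [e] at h; rw [h]

lemma tri_add1 (x₁ x₂ y z : V) : ω ![x₁ + x₂, y, z] = ω ![x₁, y, z] + ω ![x₂, y, z] :=
  ω.map_vecCons_add ![y, z] x₁ x₂

lemma tri_smul1 (c : F) (x y z : V) : ω ![c • x, y, z] = c • ω ![x, y, z] :=
  ω.map_vecCons_smul ![y, z] c x

lemma tri_add2 (x y₁ y₂ z : V) : ω ![x, y₁ + y₂, z] = ω ![x, y₁, z] + ω ![x, y₂, z] := by
  have h := tri_add1 ω y₁ y₂ x z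
  linear_combination tri_swap01 ω x (y₁+y₂) z - tri_swap01 ω x y₁ z - tri_swap01 ω x y₂ z - h

lemma tri_smul2 (c : F) (x y z : V) : ω ![x, c • y, z] = c • ω ![x, y, z] := by
  have h := tri_smul1 ω c y x z
  rw [smul_eq_mul] at *
  linear_combination tri_swap01 ω x (c • y) z - c * tri_swap01 ω x y z - h

lemma tri_add3 (x y z₁ z₂ : V) : ω ![x, y, z₁ + z₂] = ω ![x, y, z₁] + ω ![x, y, z₂] := by
  have h := tri_add1 ω z₁ z₂ y x
  linear_combination tri_swap02 ω x y (z₁+z₂) - tri_swap02 ω x y z₁ - tri_swap02 ω x y z₂ - h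

lemma tri_smul3 (c : F) (x y z : V) : ω ![x, y, c • z] = c • ω ![x, y, z] := by
  have h := tri_smul1 ω c z y x
  rw [smul_eq_mul] at *
  linear_combination tri_swap02 ω x y (c • z) - c * tri_swap02 ω x y z - h

lemma mem_radical_iff (v : V) :
    v ∈ LinearMap.ker ω.curryLeft ↔ ∀ x y : V, ω ![v, x, y] = 0 := by
  rw [LinearMap.mem_ker]
  constructor
  · intro h x y
    have := DFunLike.congr_fun h ![x, y]
    simpa using this
  · intro h
    ext m
    have e : Matrix.vecCons v m = ![v, m 0, m 1] := by
      funext i; fin_cases i <;> simp [Matrix.vecHead, Matrix.vecTail]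
    simp only [AlternatingMap.curryLeft_apply_apply, AlternatingMap.zero_apply]
    rw [e]; exact h _ _

lemma radical_zero1 {k : V} (hk : k ∈ LinearMap.ker ω.curryLeft) (y z : V) :
    ω ![k, y, z] = 0 := (mem_radical_iff ω k).mp hk y z

lemma radical_zero2 {k : V} (hk : k ∈ LinearMap.ker ω.curryLeft) (x z : V) :
    ω ![x, k, z] = 0 := by
  rw [tri_swap01, radical_zero1 ω hk, neg_zero]

lemma radical_zero3 {k : V} (hk : k ∈ LinearMap.ker ω.curryLeft) (x y : V) :
    ω ![x, y, k] = 0 := by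
  rw [tri_swap02, radical_zero1 ω hk, neg_zero]

lemma tri_congr (x y z k₁ k₂ k₃ : V) (h₁ : k₁ ∈ LinearMap.ker ω.curryLeft)
    (h₂ : k₂ ∈ LinearMap.ker ω.curryLeft) (h₃ : k₃ ∈ LinearMap.ker ω.curryLeft) :
    ω ![x + k₁, y + k₂, z + k₃] = ω ![x, y, z] := by
  rw [tri_add1, radical_zero1 ω h₁, add_zero, tri_add2, radical_zero2 ω h₂, add_zero,
    tri_add3, radical_zero3 ω h₃, add_zero]

end helpers

section disj
variable {F : Type*} [Field F] {V : Type*} [AddCommGroup V] [Module F V]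
  (ω : V [⋀^Fin 3]→ₗ[F] F)

lemma good_eq_zero (Λ : Submodule F V) (h3 : Module.finrank F Λ = 3)
    (hne : ∃ v₁ ∈ Λ, ∃ v₂ ∈ Λ, ∃ v₃ ∈ Λ, ω ![v₁, v₂, v₃] ≠ 0) {k : V}
    (hkΛ : k ∈ Λ) (hkK : k ∈ LinearMap.ker ω.curryLeft) : k = 0 := by
  obtain ⟨v₁, h₁, v₂, h₂, v₃, h₃, hω⟩ := hne
  have li : LinearIndependent F ![v₁, v₂, v₃] := by
    by_contra h
    exact hω (ω.map_linearDependent _ h)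
  haveI : FiniteDimensional F Λ := .of_finrank_pos (by omega)
  set b : Fin 3 → Λ := ![⟨v₁, h₁⟩, ⟨v₂, h₂⟩, ⟨v₃, h₃⟩] with hb
  have lib : LinearIndependent F b := by
    apply LinearIndependent.of_comp Λ.subtype
    have e : Λ.subtype ∘ b = ![v₁, v₂, v₃] := by
      funext i; fin_cases i <;> rfl
    rw [e]; exact li
  have hspan : span F (Set.range b) = ⊤ :=
    lib.span_eq_top_of_card_eq_finrank' (by simp [h3])
  have hk' : (⟨k, hkΛ⟩ : Λ) ∈ span F (Set.range b) := hspan ▸ mem_top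
  rw [mem_span_range_iff_exists_fun] at hk'
  obtain ⟨c, hc⟩ := hk'
  have hkV : k = c 0 • v₁ + c 1 • v₂ + c 2 • v₃ := by
    have := congrArg Λ.subtype hc
    simp [Fin.sum_univ_three, hb] at this
    exact this.symm
  have z220 : ω ![v₂, v₂, v₃] = 0 :=
    ω.map_eq_zero_of_eq ![v₂, v₂, v₃] (i := 0) (j := 1) rfl (by decide)
  have z320 : ω ![v₃, v₂, v₃] = 0 :=
    ω.map_eq_zero_of_eq ![v₃, v₂, v₃] (i := 0) (j := 2) rfl (by decide)
  have z110 : ω ![v₁, v₁, v₃] = 0 :=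
    ω.map_eq_zero_of_eq ![v₁, v₁, v₃] (i := 0) (j := 1) rfl (by decide)
  have z330 : ω ![v₁, v₃, v₃] = 0 :=
    ω.map_eq_zero_of_eq ![v₁, v₃, v₃] (i := 1) (j := 2) rfl (by decide)
  have z101 : ω ![v₁, v₂, v₁] = 0 :=
    ω.map_eq_zero_of_eq ![v₁, v₂, v₁] (i := 0) (j := 2) rfl (by decide)
  have z202 : ω ![v₁, v₂, v₂] = 0 :=
    ω.map_eq_zero_of_eq ![v₁, v₂, v₂] (i := 1) (j := 2) rfl (by decide)
  have e0 : ω ![k, v₂, v₃] = c 0 • ω ![v₁, v₂, v₃] := by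
    rw [hkV, tri_add1, tri_add1, tri_smul1, tri_smul1, tri_smul1, z220, z320]
    simp
  have e1 : ω ![v₁, k, v₃] = c 1 • ω ![v₁, v₂, v₃] := by
    rw [hkV, tri_add2, tri_add2, tri_smul2, tri_smul2, tri_smul2, z110, z330]
    simp
  have e2 : ω ![v₁, v₂, k] = c 2 • ω ![v₁, v₂, v₃] := by
    rw [hkV, tri_add3, tri_add3, tri_smul3, tri_smul3, tri_smul3, z101, z202]
    simp
  have hc0 : c 0 = 0 := by
    have := radical_zero1 ω hkK v₂ v₃
    rw [e0] at this
    exact (smul_eq_zero.mp this).resolve_right hω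
  have hc1 : c 1 = 0 := by
    have := radical_zero2 ω hkK v₁ v₃
    rw [e1] at this
    exact (smul_eq_zero.mp this).resolve_right hω
  have hc2 : c 2 = 0 := by
    have := radical_zero3 ω hkK v₁ v₂
    rw [e2] at this
    exact (smul_eq_zero.mp this).resolve_right hω
  simp [hkV, hc0, hc1, hc2]
end disj


theorem wt3_aux {F : Type*} [Field F] [Fintype F] {V : Type*} [AddCommGroup V] [Module F V]
    [FiniteDimensional F V] [Finite V] (q r : ℕ) (hq : Fintype.card F = q)
    (ω : V [⋀^Fin 3]→ₗ[F] F)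
    (hr : Module.finrank F (LinearMap.ker ω.curryLeft) = r)
    (W : Submodule F V)
    (hW : IsCompl (LinearMap.ker ω.curryLeft) W) :
    wt3 ω = q ^ (3 * r) * wt3 (ω.compLinearMap W.subtype) := by
  classical
  set K : Submodule F V := LinearMap.ker ω.curryLeft with hKdef
  set ω' := ω.compLinearMap W.subtype with hω'def
  set π : V →ₗ[F] W := W.linearProjOfIsCompl K hW.symm with hπdef
  set πK : V →ₗ[F] K := K.linearProjOfIsCompl W hW with hπKdef
  have hπW : ∀ w : W, π (w : V) = w := fun w =>
    Submodule.linearProjOfIsCompl_apply_left hW.symm w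
  have hπK0 : ∀ k : V, k ∈ K → π k = 0 := fun k hk =>
    Submodule.projectionOnto_apply_of_mem_right hW.symm hk
  have hπ0K : ∀ k : V, π k = 0 → k ∈ K := fun k hk =>
    (Submodule.linearProjOfIsCompl_apply_eq_zero_iff hW.symm).mp hk
  have hdecomp : ∀ v : V, ((πK v : V) + (π v : V)) = v := fun v =>
    Submodule.projection_add_projection_eq_self hW v
  have hω'app : ∀ w₁ w₂ w₃ : W, ω' ![w₁, w₂, w₃] = ω ![(w₁ : V), w₂, w₃] := by
    intro w₁ w₂ w₃
    rw [hω'def, AlternatingMap.compLinearMap_apply]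
    congr 1
    funext i; fin_cases i <;> rfl
  let P : Submodule F V → Prop := fun Λ => Module.finrank F Λ = 3 ∧
    ∃ v₁ ∈ Λ, ∃ v₂ ∈ Λ, ∃ v₃ ∈ Λ, ω ![v₁, v₂, v₃] ≠ 0
  let P' : Submodule F W → Prop := fun Λ => Module.finrank F Λ = 3 ∧
    ∃ v₁ ∈ Λ, ∃ v₂ ∈ Λ, ∃ v₃ ∈ Λ, ω' ![v₁, v₂, v₃] ≠ 0
  -- injectivity of π on good subspaces
  have key : ∀ Λ : Submodule F V, P Λ → Function.Injective (π ∘ₗ Λ.subtype) := by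
    intro Λ hΛ
    rw [← LinearMap.ker_eq_bot, Submodule.eq_bot_iff]
    rintro x hx
    rw [LinearMap.mem_ker, LinearMap.comp_apply] at hx
    have hxK : (x : V) ∈ K := hπ0K _ hx
    have : (x : V) = 0 := good_eq_zero ω Λ hΛ.1 hΛ.2 x.2 hxK
    exact Subtype.ext this
  -- the forward map on good subspaces
  have hmapP : ∀ Λ : Submodule F V, P Λ → P' (Submodule.map π Λ) := by
    intro Λ hΛ
    obtain ⟨h3, v₁, h₁, v₂, h₂, v₃, h₃, hω0⟩ := hΛ
    have hrange : Submodule.map π Λ = LinearMap.range (π ∘ₗ Λ.subtype) := by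
      rw [LinearMap.range_comp, Submodule.range_subtype]
    constructor
    · rw [hrange, LinearMap.finrank_range_of_inj (key Λ ⟨h3, v₁, h₁, v₂, h₂, v₃, h₃, hω0⟩), h3]
    · refine ⟨π v₁, Submodule.mem_map_of_mem h₁, π v₂, Submodule.mem_map_of_mem h₂,
        π v₃, Submodule.mem_map_of_mem h₃, ?_⟩
      rw [hω'app]
      have e : ω ![((π v₁ : W) : V), (π v₂ : W), (π v₃ : W)] = ω ![v₁, v₂, v₃] := by
        conv_rhs => rw [← hdecomp v₁, ← hdecomp v₂, ← hdecomp v₃]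
        rw [add_comm ((πK v₁ : V)), add_comm ((πK v₂ : V)), add_comm ((πK v₃ : V))]
        exact (tri_congr ω _ _ _ _ _ _ (πK v₁).2 (πK v₂).2 (πK v₃).2).symm
      rw [e]; exact hω0
  let Φ : {Λ : Submodule F V // P Λ} → {Λ' : Submodule F W // P' Λ'} :=
    fun Λ => ⟨Submodule.map π Λ.1, hmapP Λ.1 Λ.2⟩
  -- fiber parametrization
  have fiber_equiv : ∀ y : {Λ' : Submodule F W // P' Λ'},
      {x : {Λ : Submodule F V // P Λ} // Φ x = y} ≃ (Fin 3 → K) := by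
    intro y
    obtain ⟨Λ', hΛ'⟩ := y
    let L : (Λ' →ₗ[F] K) → (Λ' →ₗ[F] V) :=
      fun f => W.subtype ∘ₗ Λ'.subtype + K.subtype ∘ₗ f
    have hπL : ∀ f, π ∘ₗ L f = Λ'.subtype := by
      intro f
      ext x
      have h : (L f) x = ((Λ'.subtype x : W) : V) + ((f x : K) : V) := rfl
      rw [LinearMap.comp_apply, h, map_add, hπW, hπK0 _ (f x).2, add_zero]
    have hLinj : ∀ f, Function.Injective (L f) := by
      intro f a b hab
      have : (π ∘ₗ L f) a = (π ∘ₗ L f) b := by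
        simp only [LinearMap.comp_apply, hab]
      rw [hπL] at this
      exact Subtype.ext this
    have hLmap : ∀ f, Submodule.map π (LinearMap.range (L f)) = Λ' := by
      intro f
      rw [← LinearMap.range_comp, hπL, Submodule.range_subtype]
    have hLP : ∀ f, P (LinearMap.range (L f)) := by
      intro f
      constructor
      · rw [LinearMap.finrank_range_of_inj (hLinj f), hΛ'.1]
      · obtain ⟨w₁, hw₁, w₂, hw₂, w₃, hw₃, hw⟩ := hΛ'.2
        refine ⟨L f ⟨w₁, hw₁⟩, LinearMap.mem_range_self _ _,
          L f ⟨w₂, hw₂⟩, LinearMap.mem_range_self _ _,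
          L f ⟨w₃, hw₃⟩, LinearMap.mem_range_self _ _, ?_⟩
        have e : ∀ (w : W) (hw : w ∈ Λ'), L f ⟨w, hw⟩ = (w : V) + (f ⟨w, hw⟩ : V) := by
          intro w hw; rfl
        rw [e w₁ hw₁, e w₂ hw₂, e w₃ hw₃,
          tri_congr ω _ _ _ _ _ _ (f ⟨w₁, hw₁⟩).2 (f ⟨w₂, hw₂⟩).2 (f ⟨w₃, hw₃⟩).2,
          ← hω'app]
        exact hw
    let G : (Λ' →ₗ[F] K) → {x : {Λ : Submodule F V // P Λ} // Φ x = ⟨Λ', hΛ'⟩} :=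
      fun f => ⟨⟨LinearMap.range (L f), hLP f⟩, Subtype.ext (hLmap f)⟩
    have hGbij : Function.Bijective G := by
      constructor
      · intro f g h
        have hr : LinearMap.range (L f) = LinearMap.range (L g) :=
          congrArg (fun x => x.1.1) h
        refine LinearMap.ext fun x => ?_
        have hmem : L f x ∈ LinearMap.range (L g) := hr ▸ LinearMap.mem_range_self _ _
        obtain ⟨z, hz⟩ := hmem
        have hzx : z = x := by
          have h1 : (π ∘ₗ L g) z = (π ∘ₗ L f) x := by
            simp only [LinearMap.comp_apply, hz]
          rw [hπL, hπL] at h1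
          exact Subtype.ext h1
        subst hzx
        have hsum : ((Λ'.subtype z : W) : V) + ((g z : K) : V)
            = ((Λ'.subtype z : W) : V) + ((f z : K) : V) := hz
        have hfg := add_left_cancel hsum
        exact (Subtype.ext hfg).symm
      · rintro ⟨⟨Λ, hΛ⟩, hfib⟩
        have hmapΛ : Submodule.map π Λ = Λ' := congrArg Subtype.val hfib
        have hp : Function.Injective (π ∘ₗ Λ.subtype) := key Λ hΛ
        have hrangep : LinearMap.range (π ∘ₗ Λ.subtype) = Λ' := by
          rw [LinearMap.range_comp, Submodule.range_subtype, hmapΛ]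
        let eqv : Λ ≃ₗ[F] Λ' :=
          (LinearEquiv.ofInjective _ hp).trans (LinearEquiv.ofEq _ _ hrangep)
        have heqv : ∀ z : Λ, ((eqv z : Λ') : W) = π (z : V) := fun z => rfl
        let f : Λ' →ₗ[F] K := πK ∘ₗ Λ.subtype ∘ₗ (eqv.symm : Λ' →ₗ[F] Λ)
        refine ⟨f, ?_⟩
        have hle : LinearMap.range (L f) ≤ Λ := by
          rintro v ⟨x, rfl⟩
          have h1 : ((eqv (eqv.symm x) : Λ') : W) = π ((eqv.symm x : Λ) : V) :=
            heqv (eqv.symm x)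
          rw [eqv.apply_symm_apply] at h1
          have h2 : ((πK ((eqv.symm x : Λ) : V) : V)) + ((x : W) : V)
              = ((eqv.symm x : Λ) : V) := by
            have hd := hdecomp ((eqv.symm x : Λ) : V)
            rw [← h1] at hd
            exact hd
          have h3 : L f x = ((eqv.symm x : Λ) : V) := by
            show (Λ'.subtype x : V) + (f x : V) = _
            have : (f x : V) = (πK ((eqv.symm x : Λ) : V) : V) := rfl
            rw [this, add_comm]
            exact h2
          rw [h3]
          exact (eqv.symm x).2
        have heq : LinearMap.range (L f) = Λ := by
          apply Submodule.eq_of_le_of_finrank_eq hle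
          rw [(hLP f).1, hΛ.1]
        exact Subtype.ext (Subtype.ext heq)
    exact (((Module.finBasisOfFinrankEq F Λ' hΛ'.1).constr F).toEquiv.trans
      (Equiv.ofBijective G hGbij)).symm
  have Etot : {Λ : Submodule F V // P Λ} ≃ {Λ' : Submodule F W // P' Λ'} × (Fin 3 → K) :=
    ((Equiv.sigmaFiberEquiv Φ).symm.trans (Equiv.sigmaCongrRight fiber_equiv)).trans
      (Equiv.sigmaEquivProd _ _)
  have hcard := Nat.card_congr Etot
  haveI : Fintype (↥K) := Fintype.ofFinite _
  have hcardK : Nat.card (↥K) = q ^ r := by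
    rw [Nat.card_eq_fintype_card, card_eq_pow_finrank (K := F), hq, hr]
  have hfun : Nat.card (Fin 3 → ↥K) = q ^ (3 * r) := by
    rw [Nat.card_fun, hcardK, Nat.card_eq_fintype_card, Fintype.card_fin, ← pow_mul, mul_comm r 3]
  have final : Nat.card {Λ : Submodule F V // P Λ}
      = q ^ (3 * r) * Nat.card {Λ' : Submodule F W // P' Λ'} := by
    rw [hcard, Nat.card_prod, hfun]
    ring
  exact final

end Auxiliary

/-- If the radical `{v : ι_v ω = 0}` of a 3-form `ω` on `F_q^m` has
dimension `r`, and `ω̃` is the restriction of `ω` to a complement `W` of the radical, then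
`wt(ω) = q^{3r} · wt(ω̃)`. -/
theorem degenerate_three_form_weight (F : Type*) [Field F] [Fintype F] (q m r : ℕ)
    (hq : Fintype.card F = q)
    (ω : (Fin m → F) [⋀^Fin 3]→ₗ[F] F)
    (hr : Module.finrank F (LinearMap.ker ω.curryLeft) = r)
    (W : Submodule F (Fin m → F))
    (hW : IsCompl (LinearMap.ker ω.curryLeft) W) :
    wt3 ω = q ^ (3 * r) * wt3 (ω.compLinearMap W.subtype) := by
  exact wt3_aux q r hq ω hr W hW
end

section
/- Let ω be a degenerate 3-form on F_q^m with r-dimensional radical, and ω̃ its (non-degenerate) restriction to a complement of the radical. Then |Aut(ω)| = |Aut(ω̃)| · |GL(r, F_q)| · q^{r(m−r)}, where Aut(ω) = {g ∈ GL(m, F_q) : ω(gv_1, gv_2, gv_3) = ω(v_1,v_2,v_3) for all v_1,v_2,v_3}. -/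
open Module Submodule

set_option linter.unusedSectionVars false

section Aux

variable {F : Type*} [Field F] {V : Type*} [AddCommGroup V] [Module F V]
  [FiniteDimensional F V]
variable (ω : V [⋀^Fin 3]→ₗ[F] F) (K W : Submodule F V)

private theorem tf_sw01 (u v w : V) : ω ![u, v, w] = -ω ![v, u, w] := by
  have h := ω.map_swap ![v, u, w] (by decide : (0 : Fin 3) ≠ 1)
  have he : (![v, u, w] ∘ Equiv.swap (0 : Fin 3) 1) = ![u, v, w] := by
    funext i; fin_cases i <;> simp [Equiv.swap_apply_def, Fin.ext_iff]
  rw [he] at h; rw [h]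

private theorem tf_sw02 (u v w : V) : ω ![u, v, w] = -ω ![w, v, u] := by
  have h := ω.map_swap ![w, v, u] (by decide : (0 : Fin 3) ≠ 2)
  have he : (![w, v, u] ∘ Equiv.swap (0 : Fin 3) 2) = ![u, v, w] := by
    funext i; fin_cases i <;> simp [Equiv.swap_apply_def, Fin.ext_iff]
  rw [he] at h; rw [h]

-- additivity by a radical element in the first slot
private theorem tf_add1 (hK : ∀ v : V, v ∈ K ↔ ∀ y z : V, ω ![v, y, z] = 0)
    (a k y z : V) (hk : k ∈ K) :
    ω ![a + k, y, z] = ω ![a, y, z] := by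
  have h1 : ω ![a + k, y, z] = ω.curryLeft (a + k) ![y, z] := rfl
  rw [h1, map_add]
  have h2 : ω.curryLeft a ![y, z] = ω ![a, y, z] := rfl
  have h3 : ω.curryLeft k ![y, z] = ω ![k, y, z] := rfl
  rw [AlternatingMap.add_apply, h2, h3, (hK k).mp hk y z, add_zero]

private theorem tf_add2 (hK : ∀ v : V, v ∈ K ↔ ∀ y z : V, ω ![v, y, z] = 0)
    (a k y z : V) (hk : k ∈ K) :
    ω ![y, a + k, z] = ω ![y, a, z] := by
  rw [tf_sw01 ω y (a + k) z, tf_add1 ω K hK a k y z hk, ← tf_sw01]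

private theorem tf_add3 (hK : ∀ v : V, v ∈ K ↔ ∀ y z : V, ω ![v, y, z] = 0)
    (a k y z : V) (hk : k ∈ K) :
    ω ![y, z, a + k] = ω ![y, z, a] := by
  rw [tf_sw02 ω y z (a + k), tf_add1 ω K hK a k z y hk, ← tf_sw02]

variable (hW : IsCompl K W)

/-- projection to the radical -/
noncomputable def tfPK : V →ₗ[F] K := K.linearProjOfIsCompl W hW

/-- projection to the complement -/
noncomputable def tfPW : V →ₗ[F] W := W.linearProjOfIsCompl K hW.symm

private theorem tf_decomp (x : V) : ↑(tfPW K W hW x) + ↑(tfPK K W hW x) = x := by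
  rw [add_comm]
  exact Submodule.projection_add_projection_eq_self hW x

private theorem tf_main (hK : ∀ v : V, v ∈ K ↔ ∀ y z : V, ω ![v, y, z] = 0)
    (x y z : V) :
    ω ![x, y, z] = ω ![↑(tfPW K W hW x), ↑(tfPW K W hW y), ↑(tfPW K W hW z)] := by
  conv_lhs => rw [← tf_decomp K W hW x, ← tf_decomp K W hW y, ← tf_decomp K W hW z]
  rw [tf_add1 ω K hK _ _ _ _ (tfPK K W hW x).2,
    tf_add2 ω K hK _ _ _ _ (tfPK K W hW y).2,
    tf_add3 ω K hK _ _ _ _ (tfPK K W hW z).2]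

private theorem tf_subtype_comp (x y z : W) :
    (fun i => (W.subtype) (![x, y, z] i)) = ![(x : V), y, z] := by
  funext i; fin_cases i <;> rfl

private theorem tf_comp_apply (x y z : W) :
    ω.compLinearMap W.subtype ![x, y, z] = ω ![(x : V), y, z] := by
  rw [AlternatingMap.compLinearMap_apply, tf_subtype_comp]

private theorem tf_pW_W (hW : IsCompl K W) (w : W) : tfPW K W hW (w : V) = w :=
  Submodule.linearProjOfIsCompl_apply_left hW.symm w

private theorem tf_pW_K (hW : IsCompl K W) (k : K) : tfPW K W hW (k : V) = 0 :=
  Submodule.linearProjOfIsCompl_apply_right hW.symm k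

private theorem tf_pK_K (hW : IsCompl K W) (k : K) : tfPK K W hW (k : V) = k :=
  Submodule.linearProjOfIsCompl_apply_left hW k

private theorem tf_pK_W (hW : IsCompl K W) (w : W) : tfPK K W hW (w : V) = 0 :=
  Submodule.linearProjOfIsCompl_apply_right hW w

private theorem tf_pW_zero_iff (hW : IsCompl K W) (x : V) :
    tfPW K W hW x = 0 ↔ x ∈ K :=
  Submodule.linearProjOfIsCompl_apply_eq_zero_iff hW.symm

section Maps

variable (hK : ∀ v : V, v ∈ K ↔ ∀ y z : V, ω ![v, y, z] = 0) (hW : IsCompl K W)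

include hK in
/-- an automorphism maps the radical into the radical -/
private theorem tf_gK (g : V ≃ₗ[F] V)
    (hg : ∀ v₁ v₂ v₃, ω ![g v₁, g v₂, g v₃] = ω ![v₁, v₂, v₃]) :
    ∀ x ∈ K, (g : V →ₗ[F] V) x ∈ K := by
  intro x hx
  rw [hK]
  intro y z
  have h1 := hg x (g.symm y) (g.symm z)
  simp only [LinearEquiv.apply_symm_apply] at h1
  show ω ![g x, y, z] = 0
  rw [h1]
  exact (hK x).mp hx _ _

include hK in
private theorem tf_gK' (g : V ≃ₗ[F] V)
    (hg : ∀ v₁ v₂ v₃, ω ![g v₁, g v₂, g v₃] = ω ![v₁, v₂, v₃]) :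
    ∀ x ∈ K, g.symm x ∈ K := by
  intro x hx
  rw [hK]
  intro y z
  have h1 := hg (g.symm x) y z
  simp only [LinearEquiv.apply_symm_apply] at h1
  rw [← h1]
  exact (hK x).mp hx _ _

/-- the `W → W` block of `g` -/
private noncomputable def tfAL (g : V ≃ₗ[F] V) : W →ₗ[F] W :=
  tfPW K W hW ∘ₗ ((g : V →ₗ[F] V) ∘ₗ W.subtype)

/-- the `W → K` block of `g` -/
private noncomputable def tfBL (g : V ≃ₗ[F] V) : W →ₗ[F] K :=
  tfPK K W hW ∘ₗ ((g : V →ₗ[F] V) ∘ₗ W.subtype)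

include hK in
private theorem tf_aInj (g : V ≃ₗ[F] V)
    (hg : ∀ v₁ v₂ v₃, ω ![g v₁, g v₂, g v₃] = ω ![v₁, v₂, v₃]) :
    Function.Injective (tfAL K W hW g) := by
  rw [injective_iff_map_eq_zero]
  intro w hw
  have h1 : g (w : V) ∈ K := by
    have : tfPW K W hW (g (w : V)) = 0 := hw
    rwa [tf_pW_zero_iff] at this
  have h2 : (w : V) ∈ K := by
    have := tf_gK' ω K hK g hg _ h1
    rwa [LinearEquiv.symm_apply_apply] at this
  have h3 : (w : V) = 0 := Submodule.disjoint_def.mp hW.disjoint _ h2 w.2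
  exact Subtype.ext h3

include hK in
private theorem tf_dInj (g : V ≃ₗ[F] V)
    (hg : ∀ v₁ v₂ v₃, ω ![g v₁, g v₂, g v₃] = ω ![v₁, v₂, v₃]) :
    Function.Injective ((g : V →ₗ[F] V).restrict (tf_gK ω K hK g hg)) := by
  intro a b h
  have : g (a : V) = g (b : V) := congrArg Subtype.val h
  exact Subtype.ext (g.injective this)

/-- the reassembled linear map from the three blocks -/
private noncomputable def tfGL (a : W ≃ₗ[F] W) (d : K ≃ₗ[F] K) (b : W →ₗ[F] K) :
    V →ₗ[F] V :=
  K.subtype ∘ₗ ((d : K →ₗ[F] K) ∘ₗ tfPK K W hW) + K.subtype ∘ₗ (b ∘ₗ tfPW K W hW)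
    + W.subtype ∘ₗ ((a : W →ₗ[F] W) ∘ₗ tfPW K W hW)

private theorem tfGL_apply (a : W ≃ₗ[F] W) (d : K ≃ₗ[F] K) (b : W →ₗ[F] K) (v : V) :
    tfGL K W hW a d b v =
      ↑(d (tfPK K W hW v)) + ↑(b (tfPW K W hW v)) + ↑(a (tfPW K W hW v)) := rfl

private theorem tfGL_pW (a : W ≃ₗ[F] W) (d : K ≃ₗ[F] K) (b : W →ₗ[F] K) (v : V) :
    tfPW K W hW (tfGL K W hW a d b v) = a (tfPW K W hW v) := by
  rw [tfGL_apply, map_add, map_add, tf_pW_K, tf_pW_K, tf_pW_W, zero_add, zero_add]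

private theorem tf_gInj (a : W ≃ₗ[F] W) (d : K ≃ₗ[F] K) (b : W →ₗ[F] K) :
    Function.Injective (tfGL K W hW a d b) := by
  rw [injective_iff_map_eq_zero]
  intro v hv
  have h1 : a (tfPW K W hW v) = 0 := by rw [← tfGL_pW K W hW a d b v, hv, map_zero]
  have h2 : tfPW K W hW v = 0 := by
    have := a.injective (by rw [h1, map_zero] : a (tfPW K W hW v) = a 0); exact this
  have h3 : tfGL K W hW a d b v = ↑(d (tfPK K W hW v)) := by
    rw [tfGL_apply, h2, map_zero, map_zero]; simp
  have h4 : (↑(d (tfPK K W hW v)) : V) = 0 := by rw [← h3, hv]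
  have h5 : tfPK K W hW v = 0 := by
    have h6 : d (tfPK K W hW v) = 0 := Subtype.ext h4
    have := d.injective (by rw [h6, map_zero] : d (tfPK K W hW v) = d 0); exact this
  rw [← tf_decomp K W hW v, h2, h5]; simp

end Maps

private theorem tf_equiv (hK : ∀ v : V, v ∈ K ↔ ∀ y z : V, ω ![v, y, z] = 0)
    (hW : IsCompl K W) :
    Nonempty ({g : V ≃ₗ[F] V // ∀ v₁ v₂ v₃, ω ![g v₁, g v₂, g v₃] = ω ![v₁, v₂, v₃]} ≃
      ({g : W ≃ₗ[F] W // ∀ w₁ w₂ w₃,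
          ω.compLinearMap W.subtype ![g w₁, g w₂, g w₃] =
            ω.compLinearMap W.subtype ![w₁, w₂, w₃]} ×
        (K ≃ₗ[F] K) × (W →ₗ[F] K))) := by
  refine ⟨⟨fun gp =>
      (⟨LinearEquiv.ofInjectiveEndo (tfAL K W hW gp.1)
          (tf_aInj ω K W hK hW gp.1 gp.2), ?_⟩,
        LinearEquiv.ofInjectiveEndo ((gp.1 : V →ₗ[F] V).restrict (tf_gK ω K hK gp.1 gp.2))
          (tf_dInj ω K hK gp.1 gp.2),
        tfBL K W hW gp.1),
    fun t => ⟨LinearEquiv.ofInjectiveEndo (tfGL K W hW t.1.1 t.2.1 t.2.2)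
        (tf_gInj K W hW t.1.1 t.2.1 t.2.2), ?_⟩, ?_, ?_⟩⟩
  · -- the W-block is an automorphism of the restricted form
    obtain ⟨g, hg⟩ := gp
    intro w₁ w₂ w₃
    rw [tf_comp_apply, tf_comp_apply]
    show ω ![↑(tfPW K W hW (g ↑w₁)), ↑(tfPW K W hW (g ↑w₂)), ↑(tfPW K W hW (g ↑w₃))]
      = ω ![(↑w₁ : V), ↑w₂, ↑w₃]
    rw [← tf_main ω K W hW hK]
    exact hg ↑w₁ ↑w₂ ↑w₃
  · -- the reassembled map is an automorphism
    obtain ⟨⟨a, ha⟩, d, b⟩ := t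
    intro v₁ v₂ v₃
    have hpw : ∀ v, tfPW K W hW (tfGL K W hW a d b v) = a (tfPW K W hW v) :=
      tfGL_pW K W hW a d b
    calc ω ![tfGL K W hW a d b v₁, tfGL K W hW a d b v₂, tfGL K W hW a d b v₃]
        = ω ![↑(tfPW K W hW (tfGL K W hW a d b v₁)),
            ↑(tfPW K W hW (tfGL K W hW a d b v₂)),
            ↑(tfPW K W hW (tfGL K W hW a d b v₃))] := tf_main ω K W hW hK _ _ _
      _ = ω ![↑(a (tfPW K W hW v₁)), ↑(a (tfPW K W hW v₂)), ↑(a (tfPW K W hW v₃))] := by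
          rw [hpw v₁, hpw v₂, hpw v₃]
      _ = ω ![↑(tfPW K W hW v₁), ↑(tfPW K W hW v₂), ↑(tfPW K W hW v₃)] := by
          have := ha (tfPW K W hW v₁) (tfPW K W hW v₂) (tfPW K W hW v₃)
          rwa [tf_comp_apply, tf_comp_apply] at this
      _ = ω ![v₁, v₂, v₃] := (tf_main ω K W hW hK _ _ _).symm
  · -- left inverse
    rintro ⟨g, hg⟩
    apply Subtype.ext
    apply LinearEquiv.ext
    intro v
    show tfGL K W hW _ _ _ v = g v
    rw [tfGL_apply]
    show (g ↑(tfPK K W hW v) : V) + ↑(tfPK K W hW (g ↑(tfPW K W hW v)))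
        + ↑(tfPW K W hW (g ↑(tfPW K W hW v))) = g v
    rw [add_assoc]
    have h2 : (↑(tfPK K W hW (g ↑(tfPW K W hW v))) : V)
        + ↑(tfPW K W hW (g ↑(tfPW K W hW v))) = g ↑(tfPW K W hW v) := by
      rw [add_comm]; exact tf_decomp K W hW _
    rw [h2, ← map_add]
    congr 1
    rw [add_comm]
    exact tf_decomp K W hW v
  · -- right inverse
    rintro ⟨⟨a, ha⟩, d, b⟩
    refine Prod.ext ?_ (Prod.ext ?_ ?_)
    · apply Subtype.ext
      apply LinearEquiv.ext
      intro w
      show tfPW K W hW (tfGL K W hW a d b ↑w) = a w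
      rw [tfGL_pW, tf_pW_W]
    · apply LinearEquiv.ext
      intro k
      apply Subtype.ext
      show tfGL K W hW a d b ↑k = ↑(d k)
      rw [tfGL_apply, tf_pK_K, tf_pW_K]
      simp
    · apply LinearMap.ext
      intro w
      show tfPK K W hW (tfGL K W hW a d b ↑w) = b w
      rw [tfGL_apply, tf_pK_W, tf_pW_W]
      simp [map_add, map_zero, tf_pK_K, tf_pK_W]

end Aux

/-- For a degenerate 3-form `ω` on `F_q^m` with `r`-dimensional radical and
non-degenerate restriction `ω̃` to a complement `W` of the radical,
`|Aut(ω)| = |Aut(ω̃)| · |GL(r, F_q)| · q^{r(m−r)}`, where `Aut` denotes the stabilizer under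
the pullback action of the general linear group. -/
theorem degenerate_three_form_aut_card (F : Type*) [Field F] [Fintype F] (q m r : ℕ)
    (hq : Fintype.card F = q)
    (ω : (Fin m → F) [⋀^Fin 3]→ₗ[F] F)
    (hr : Module.finrank F (LinearMap.ker ω.curryLeft) = r)
    (W : Submodule F (Fin m → F))
    (hW : IsCompl (LinearMap.ker ω.curryLeft) W) :
    Nat.card {g : (Fin m → F) ≃ₗ[F] (Fin m → F) //
        ∀ v₁ v₂ v₃, ω ![g v₁, g v₂, g v₃] = ω ![v₁, v₂, v₃]}
      = Nat.card {g : W ≃ₗ[F] W // ∀ w₁ w₂ w₃,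
          ω.compLinearMap W.subtype ![g w₁, g w₂, g w₃] =
            ω.compLinearMap W.subtype ![w₁, w₂, w₃]}
        * Nat.card (Matrix.GeneralLinearGroup (Fin r) F) * q ^ (r * (m - r)) := by
  classical
  set K := LinearMap.ker ω.curryLeft with hKdef
  have hKiff : ∀ v, v ∈ K ↔ ∀ y z, ω ![v, y, z] = 0 := by
    intro v
    rw [hKdef, LinearMap.mem_ker]
    constructor
    · intro h y z
      show ω.curryLeft v ![y, z] = 0
      rw [h]
      rfl
    · intro h
      ext w
      have hw : w = ![w 0, w 1] := by funext i; fin_cases i <;> rfl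
      show ω.curryLeft v w = 0
      rw [hw]
      exact h (w 0) (w 1)
  obtain ⟨E⟩ := tf_equiv ω K W hKiff hW
  rw [Nat.card_congr E, Nat.card_prod, Nat.card_prod, ← mul_assoc]
  have bK : Basis (Fin r) F K := (Module.finBasis F K).reindex (finCongr hr)
  congr 1
  congr 1
  · -- |GL(K)| = |GL(r, F)|
    let eK : K ≃ₗ[F] (Fin r → F) := bK.equivFun
    have e1 : (K ≃ₗ[F] K) ≃ ((Fin r → F) ≃ₗ[F] (Fin r → F)) :=
      { toFun := fun f => (eK.symm.trans f).trans eK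
        invFun := fun g => (eK.trans g).trans eK.symm
        left_inv := by intro f; apply LinearEquiv.ext; intro x; simp
        right_inv := by intro g; apply LinearEquiv.ext; intro x; simp }
    have e2 : Matrix.GeneralLinearGroup (Fin r) F ≃ ((Fin r → F) ≃ₗ[F] (Fin r → F)) :=
      (Matrix.GeneralLinearGroup.toLin.trans
        (LinearMap.GeneralLinearGroup.generalLinearEquiv F (Fin r → F))).toEquiv
    rw [Nat.card_congr e1, Nat.card_congr e2.symm]
  · -- |Hom(W, K)| = q ^ (r * (m - r))
    have hWr : Module.finrank F W = m - r := by
      have h1 := Submodule.finrank_add_eq_of_isCompl hW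
      rw [hr] at h1
      have h2 : Module.finrank F (Fin m → F) = m := by
        simp [Module.finrank_pi]
      rw [h2] at h1
      omega
    have bW : Basis (Fin (m - r)) F W := (Module.finBasis F W).reindex (finCongr hWr)
    have e3 : (W →ₗ[F] K) ≃ Matrix (Fin r) (Fin (m - r)) F := (LinearMap.toMatrix bW bK).toEquiv
    rw [Nat.card_congr e3, Nat.card_congr (Matrix.of.symm :
      Matrix (Fin r) (Fin (m - r)) F ≃ (Fin r → Fin (m - r) → F)),
      Nat.card_fun, Nat.card_fun]
    simp only [Nat.card_eq_fintype_card, Fintype.card_fin, hq]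
    rw [← pow_mul, Nat.mul_comm]
end

section
/- Let ω_10 = e^{123} + e^{456} + e^7 ∧ (e^{14} + e^{25} + e^{36}) on F_q^7. Then X_1(ω_10) = P{x ≠ 0 : Pf_2(ι_x ω_10) = 0} is empty. -/
open ExteriorAlgebra
open scoped LinearAlgebra.Projectivization

set_option synthInstance.maxHeartbeats 1000000
set_option maxHeartbeats 2000000

/-- The basic 1-form `e^i` (the `i`-th coordinate functional) as an element of the exterior
algebra of the dual space of `Fin n → F`. -/
noncomputable def ee (F : Type*) [Field F] {n : ℕ} (i : Fin n) :
    ExteriorAlgebra F (Module.Dual F (Fin n → F)) :=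
  ExteriorAlgebra.ι F (LinearMap.proj i)

section Aux

variable {F : Type*} [Field F] {V : Type*} [AddCommGroup V] [Module F V]

lemma iMul_iota (v : V) (φ : Module.Dual F V) :
    iMul F v (ExteriorAlgebra.ι F φ) = algebraMap F _ (φ v) := by
  simp [iMul, CliffordAlgebra.contractLeft_ι]

lemma iMul_iota_mul (v : V) (φ : Module.Dual F V)
    (x : ExteriorAlgebra F (Module.Dual F V)) :
    iMul F v (ExteriorAlgebra.ι F φ * x) = φ v • x - ExteriorAlgebra.ι F φ * iMul F v x := by
  simp [iMul, CliffordAlgebra.contractLeft_ι_mul]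

variable {n : ℕ}

lemma iMul_pair (v : Fin n → F) (i j : Fin n) :
    iMul F v (ee F i * ee F j) = v i • ee F j - v j • ee F i := by
  simp [ee, iMul_iota_mul, iMul_iota, Algebra.algebraMap_eq_smul_one, mul_smul_comm]

lemma iMul_triple (v : Fin n → F) (i j k : Fin n) :
    iMul F v (ee F i * ee F j * ee F k) =
      v i • (ee F j * ee F k) - v j • (ee F i * ee F k) + v k • (ee F i * ee F j) := by
  rw [mul_assoc, show ee F i * (ee F j * ee F k) = ExteriorAlgebra.ι F (LinearMap.proj i) * (ee F j * ee F k) from rfl,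
    iMul_iota_mul, iMul_pair]
  simp [ee, mul_sub, mul_smul_comm, smul_sub]
  abel

lemma quad {Pf : ExteriorAlgebra F (Module.Dual F V) → ℕ → ExteriorAlgebra F (Module.Dual F V)}
    (hPf0 : ∀ l, Pf l 0 = 1)
    (hPf : ∀ l ∈ ⋀[F]^2 (Module.Dual F V), ∀ (k : ℕ) (v : V),
      iMul F v (Pf l (k + 1)) = iMul F v l * Pf l k)
    {l : ExteriorAlgebra F (Module.Dual F V)} (hl : l ∈ ⋀[F]^2 (Module.Dual F V))
    (a b c d : V) (φa φb φc : Module.Dual F V)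
    (ha : iMul F a l = ExteriorAlgebra.ι F φa) (hb : iMul F b l = ExteriorAlgebra.ι F φb)
    (hc : iMul F c l = ExteriorAlgebra.ι F φc) :
    iMul F d (iMul F c (iMul F b (iMul F a (Pf l 2)))) =
      algebraMap F _ (φa b * φc d - φa c * φb d + φb c * φa d) := by
  have h1 : ∀ w : V, iMul F w (Pf l 1) = iMul F w l := fun w => by
    simpa [hPf0] using hPf l hl 0 w
  have h2 : ∀ w : V, iMul F w (Pf l 2) = iMul F w l * Pf l 1 := fun w => by
    simpa using hPf l hl 1 w
  rw [h2 a, ha, iMul_iota_mul, h1 b, hb, map_sub, map_smul, h1 c, hc, iMul_iota_mul, iMul_iota,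
    Algebra.algebraMap_eq_smul_one (φb c), mul_smul_comm, mul_one,
    map_sub, map_smul, map_sub, map_smul, map_smul, iMul_iota, iMul_iota, iMul_iota]
  simp only [map_sub, map_add, map_mul, Algebra.smul_def]
  abel

noncomputable def w7 (F : Type*) [Field F] : ExteriorAlgebra F (Module.Dual F (Fin 7 → F)) :=
  ee F 0 * ee F 1 * ee F 2 + ee F 3 * ee F 4 * ee F 5
    + ee F 6 * (ee F 0 * ee F 3 + ee F 1 * ee F 4 + ee F 2 * ee F 5)

lemma contract0 (v : Fin 7 → F) :
    iMul F (Pi.single (0 : Fin 7) (1 : F)) (iMul F v (w7 F)) =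
      ExteriorAlgebra.ι F (v 2 • (LinearMap.proj 1 : (Fin 7 → F) →ₗ[F] F)
        - v 1 • (LinearMap.proj 2 : (Fin 7 → F) →ₗ[F] F)
        + v 6 • (LinearMap.proj 3 : (Fin 7 → F) →ₗ[F] F)
        - v 3 • (LinearMap.proj 6 : (Fin 7 → F) →ₗ[F] F)) := by
  simp only [w7, map_add, iMul_triple, map_sub, map_smul, iMul_pair, mul_add, ← mul_assoc]
  simp [ee, Pi.single_apply, smul_smul, smul_sub]
  module

lemma contract1 (v : Fin 7 → F) :
    iMul F (Pi.single (1 : Fin 7) (1 : F)) (iMul F v (w7 F)) =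
      ExteriorAlgebra.ι F (
        v 0 • (LinearMap.proj 2 : (Fin 7 → F) →ₗ[F] F)
        - v 2 • (LinearMap.proj 0 : (Fin 7 → F) →ₗ[F] F)
        + v 6 • (LinearMap.proj 4 : (Fin 7 → F) →ₗ[F] F)
        - v 4 • (LinearMap.proj 6 : (Fin 7 → F) →ₗ[F] F)) := by
  simp only [w7, map_add, iMul_triple, map_sub, map_smul, iMul_pair, mul_add, ← mul_assoc]
  simp [ee, Pi.single_apply, smul_smul, smul_sub]
  module

lemma contract2 (v : Fin 7 → F) :
    iMul F (Pi.single (2 : Fin 7) (1 : F)) (iMul F v (w7 F)) =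
      ExteriorAlgebra.ι F (
        v 1 • (LinearMap.proj 0 : (Fin 7 → F) →ₗ[F] F)
        - v 0 • (LinearMap.proj 1 : (Fin 7 → F) →ₗ[F] F)
        + v 6 • (LinearMap.proj 5 : (Fin 7 → F) →ₗ[F] F)
        - v 5 • (LinearMap.proj 6 : (Fin 7 → F) →ₗ[F] F)) := by
  simp only [w7, map_add, iMul_triple, map_sub, map_smul, iMul_pair, mul_add, ← mul_assoc]
  simp [ee, Pi.single_apply, smul_smul, smul_sub]
  module

lemma contract3 (v : Fin 7 → F) :
    iMul F (Pi.single (3 : Fin 7) (1 : F)) (iMul F v (w7 F)) =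
      ExteriorAlgebra.ι F (
        v 5 • (LinearMap.proj 4 : (Fin 7 → F) →ₗ[F] F)
        - v 4 • (LinearMap.proj 5 : (Fin 7 → F) →ₗ[F] F)
        - v 6 • (LinearMap.proj 0 : (Fin 7 → F) →ₗ[F] F)
        + v 0 • (LinearMap.proj 6 : (Fin 7 → F) →ₗ[F] F)) := by
  simp only [w7, map_add, iMul_triple, map_sub, map_smul, iMul_pair, mul_add, ← mul_assoc]
  simp [ee, Pi.single_apply, smul_smul, smul_sub]
  module

lemma contract4 (v : Fin 7 → F) :
    iMul F (Pi.single (4 : Fin 7) (1 : F)) (iMul F v (w7 F)) =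
      ExteriorAlgebra.ι F (
        v 3 • (LinearMap.proj 5 : (Fin 7 → F) →ₗ[F] F)
        - v 5 • (LinearMap.proj 3 : (Fin 7 → F) →ₗ[F] F)
        - v 6 • (LinearMap.proj 1 : (Fin 7 → F) →ₗ[F] F)
        + v 1 • (LinearMap.proj 6 : (Fin 7 → F) →ₗ[F] F)) := by
  simp only [w7, map_add, iMul_triple, map_sub, map_smul, iMul_pair, mul_add, ← mul_assoc]
  simp [ee, Pi.single_apply, smul_smul, smul_sub]
  module

lemma contract5 (v : Fin 7 → F) :
    iMul F (Pi.single (5 : Fin 7) (1 : F)) (iMul F v (w7 F)) =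
      ExteriorAlgebra.ι F (
        v 4 • (LinearMap.proj 3 : (Fin 7 → F) →ₗ[F] F)
        - v 3 • (LinearMap.proj 4 : (Fin 7 → F) →ₗ[F] F)
        - v 6 • (LinearMap.proj 2 : (Fin 7 → F) →ₗ[F] F)
        + v 2 • (LinearMap.proj 6 : (Fin 7 → F) →ₗ[F] F)) := by
  simp only [w7, map_add, iMul_triple, map_sub, map_smul, iMul_pair, mul_add, ← mul_assoc]
  simp [ee, Pi.single_apply, smul_smul, smul_sub]
  module

lemma contract6 (v : Fin 7 → F) :
    iMul F (Pi.single (6 : Fin 7) (1 : F)) (iMul F v (w7 F)) =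
      ExteriorAlgebra.ι F (
        v 3 • (LinearMap.proj 0 : (Fin 7 → F) →ₗ[F] F)
        + v 4 • (LinearMap.proj 1 : (Fin 7 → F) →ₗ[F] F)
        + v 5 • (LinearMap.proj 2 : (Fin 7 → F) →ₗ[F] F)
        - v 0 • (LinearMap.proj 3 : (Fin 7 → F) →ₗ[F] F)
        - v 1 • (LinearMap.proj 4 : (Fin 7 → F) →ₗ[F] F)
        - v 2 • (LinearMap.proj 5 : (Fin 7 → F) →ₗ[F] F)) := by
  simp only [w7, map_add, iMul_triple, map_sub, map_smul, iMul_pair, mul_add, ← mul_assoc]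
  simp [ee, Pi.single_apply, smul_smul, smul_sub]
  module

lemma w7_contract_mem (v : Fin 7 → F) :
    iMul F v (w7 F) ∈ ⋀[F]^2 (Module.Dual F (Fin 7 → F)) := by
  have mem2 : ∀ i j : Fin 7, ee F i * ee F j ∈ ⋀[F]^2 (Module.Dual F (Fin 7 → F)) := by
    intro i j
    have h : (⋀[F]^2 (Module.Dual F (Fin 7 → F))) =
        LinearMap.range (ExteriorAlgebra.ι F (M := Module.Dual F (Fin 7 → F))) *
        LinearMap.range (ExteriorAlgebra.ι F (M := Module.Dual F (Fin 7 → F))) := sq _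
    rw [h]
    exact Submodule.mul_mem_mul (LinearMap.mem_range_self _ _) (LinearMap.mem_range_self _ _)
  simp only [w7, map_add, mul_add, ← mul_assoc, iMul_triple]
  repeat
    first
    | exact Submodule.smul_mem _ _ (mem2 _ _)
    | apply Submodule.add_mem
    | apply Submodule.sub_mem


end Aux

/-- For `ω₁₀ = e¹²³ + e⁴⁵⁶ + e⁷ ∧ (e¹⁴ + e²⁵ + e³⁶)` on `F_q^7`, the
weight variety `X₁(ω₁₀) = P{x ≠ 0 : Pf₂(ι_x ω₁₀) = 0}` is empty. -/
theorem X1_omega10 (F : Type*) [Field F] [Fintype F] (q : ℕ) (hq : Fintype.card F = q)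
    (Pf : ExteriorAlgebra F (Module.Dual F (Fin 7 → F)) → ℕ →
      ExteriorAlgebra F (Module.Dual F (Fin 7 → F)))
    (hPf0 : ∀ l, Pf l 0 = 1)
    (hPfmem : ∀ l ∈ ⋀[F]^2 (Module.Dual F (Fin 7 → F)), ∀ k : ℕ, 1 ≤ k →
      Pf l k ∈ ⋀[F]^(2 * k) (Module.Dual F (Fin 7 → F)))
    (hPf : ∀ l ∈ ⋀[F]^2 (Module.Dual F (Fin 7 → F)), ∀ (k : ℕ) (v : Fin 7 → F),
      iMul F v (Pf l (k + 1)) = iMul F v l * Pf l k)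
    (ω : ExteriorAlgebra F (Module.Dual F (Fin 7 → F)))
    (hω : ω = ee F 0 * ee F 1 * ee F 2 + ee F 3 * ee F 4 * ee F 5
      + ee F 6 * (ee F 0 * ee F 3 + ee F 1 * ee F 4 + ee F 2 * ee F 5)) :
    {p : ℙ F (Fin 7 → F) | ∃ v, ∃ hv : v ≠ 0, p = Projectivization.mk F v hv ∧
      Pf (iMul F v ω) 2 = 0} = ∅ := by
  have hωw : ω = w7 F := hω
  subst hωw
  rw [Set.eq_empty_iff_forall_notMem]
  rintro p ⟨v, hv, hp, h2⟩
  have key : ∀ (a b c d : Fin 7 → F) (φa φb φc : Module.Dual F (Fin 7 → F)),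
      iMul F a (iMul F v (w7 F)) = ExteriorAlgebra.ι F φa →
      iMul F b (iMul F v (w7 F)) = ExteriorAlgebra.ι F φb →
      iMul F c (iMul F v (w7 F)) = ExteriorAlgebra.ι F φc →
      φa b * φc d - φa c * φb d + φb c * φa d ≠ 0 → False := by
    intro a b c d φa φb φc ha hb hc hne
    have hq2 := quad hPf0 hPf (w7_contract_mem v) a b c d φa φb φc ha hb hc
    rw [h2] at hq2
    simp only [map_zero] at hq2
    apply hne
    have h0 : algebraMap F (ExteriorAlgebra F (Module.Dual F (Fin 7 → F)))
        (φa b * φc d - φa c * φb d + φb c * φa d) = algebraMap F _ 0 := by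
      rw [map_zero]; exact hq2.symm
    exact (ExteriorAlgebra.algebraMap_leftInverse _).injective h0
  by_cases h0 : v 0 = 0
  swap
  · exact key (Pi.single 3 1) (Pi.single 6 1) (Pi.single 1 1) (Pi.single 2 1) _ _ _
      (contract3 v) (contract6 v) (contract1 v)
      (by simp [Pi.single_apply]; exact h0)
  by_cases h1 : v 1 = 0
  swap
  · exact key (Pi.single 4 1) (Pi.single 6 1) (Pi.single 2 1) (Pi.single 0 1) _ _ _
      (contract4 v) (contract6 v) (contract2 v)
      (by simp [Pi.single_apply]; exact h1)
  by_cases hh2 : v 2 = 0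
  swap
  · exact key (Pi.single 5 1) (Pi.single 6 1) (Pi.single 0 1) (Pi.single 1 1) _ _ _
      (contract5 v) (contract6 v) (contract0 v)
      (by simp [Pi.single_apply]; exact hh2)
  by_cases h3 : v 3 = 0
  swap
  · exact key (Pi.single 6 1) (Pi.single 0 1) (Pi.single 4 1) (Pi.single 5 1) _ _ _
      (contract6 v) (contract0 v) (contract4 v)
      (by simp [Pi.single_apply]; exact h3)
  by_cases h4 : v 4 = 0
  swap
  · exact key (Pi.single 6 1) (Pi.single 1 1) (Pi.single 5 1) (Pi.single 3 1) _ _ _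
      (contract6 v) (contract1 v) (contract5 v)
      (by simp [Pi.single_apply]; exact h4)
  by_cases h5 : v 5 = 0
  swap
  · exact key (Pi.single 6 1) (Pi.single 2 1) (Pi.single 3 1) (Pi.single 4 1) _ _ _
      (contract6 v) (contract2 v) (contract3 v)
      (by simp [Pi.single_apply]; exact h5)
  have h6 : v 6 ≠ 0 := by
    intro h6
    exact hv (funext fun i => by fin_cases i <;> assumption)
  exact key (Pi.single 0 1) (Pi.single 3 1) (Pi.single 1 1) (Pi.single 4 1) _ _ _
    (contract0 v) (contract3 v) (contract1 v)
    (by simp [Pi.single_apply, h0, h1, hh2, h3, h4, h5]; exact h6)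
end
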